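/- arXiv:1809.08483 — 6 statements merged into one kernel-verified Lean document; each statement's English description precedes it below -/
import Mathlib

section
/- Let M be a symplectic matroid with bases B and circuits C (minimal admissible sets contained in no basis). Let B ∈ B and x ∉ B with B ∪ {x} admissible. Then B ∪ {x} contains a unique circuit C, and C = {x} ∪ {b ∈ B : B ∪ {x} − {b} ∈ B}. -/
open Finset

/-- The ground set `E_{±n} = [n] ∪ [n]*`, where `(i, false)` denotes `i`
and `(i, true)` denotes `i*`. -/
abbrev EE (n : ℕ) := Fin n × Bool

/-- The involution `* : E_{±n} → E_{±n}`. -/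
def estar {n : ℕ} (x : EE n) : EE n := (x.1, !x.2)

/-- `S* = {x* : x ∈ S}`. -/
def starSet {n : ℕ} (S : Finset (EE n)) : Finset (EE n) := S.image estar

/-- A set is admissible if `S ∩ S* = ∅`. -/
def Admissible {n : ℕ} (S : Finset (EE n)) : Prop := Disjoint S (starSet S)

/-- An admissible ordering of `E_{±n}`, encoded by an injective rank function `w`
such that `x < y` implies `y* < x*`. -/
structure AdmOrdering (n : ℕ) where
  w : EE n → ℕ
  inj : Function.Injective w
  rev : ∀ x y, w x < w y → w (estar y) < w (estar x)

/-- The induced (componentwise) partial order on subsets: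
compare the sorted lists of ranks entrywise. -/
def setLE {n : ℕ} (o : AdmOrdering n) (A B : Finset (EE n)) : Prop :=
  List.Forall₂ (· ≤ ·) (Finset.sort (A.image o.w) (· ≤ ·)) (Finset.sort (B.image o.w) (· ≤ ·))

/-- The Maximality Property: for every admissible ordering, the family has a
unique maximal member in the induced partial order. -/
def HasUniqueMaximal {n : ℕ} (𝓑 : Set (Finset (EE n))) : Prop :=
  ∀ o : AdmOrdering n, ∃! M, M ∈ 𝓑 ∧ ∀ S ∈ 𝓑, setLE o M S → M = S

/-- A symplectic matroid: a nonempty family of equinumerous admissible subsets of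
`E_{±n}` with a unique maximal member under every admissible ordering. -/
def IsSymplecticMatroid {n : ℕ} (𝓑 : Set (Finset (EE n))) : Prop :=
  𝓑.Nonempty ∧ (∀ S ∈ 𝓑, Admissible S) ∧ (∀ S ∈ 𝓑, ∀ T ∈ 𝓑, S.card = T.card) ∧
    HasUniqueMaximal 𝓑

/-- The circuits of a family of bases: minimal admissible subsets of `E_{±n}`
contained in no member of `𝓑`. -/
def Circuits {n : ℕ} (𝓑 : Set (Finset (EE n))) : Set (Finset (EE n)) :=
  {C | Admissible C ∧ (∀ B ∈ 𝓑, ¬ C ⊆ B) ∧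
    ∀ D ⊂ C, Admissible D → ∃ B ∈ 𝓑, D ⊆ B}

/-- The bases determined by a circuit family: maximal admissible subsets of
`E_{±n}` containing no member of `𝓒`. -/
def BasesOf {n : ℕ} (𝓒 : Set (Finset (EE n))) : Set (Finset (EE n)) :=
  {B | Admissible B ∧ (∀ C ∈ 𝓒, ¬ C ⊆ B) ∧
    ∀ D, B ⊂ D → Admissible D → ∃ C ∈ 𝓒, C ⊆ D}

/-- `P` spans `x` if some `J ∈ 𝓒` has `J − P = {x}`. -/
def Spans {n : ℕ} (𝓒 : Set (Finset (EE n))) (P : Finset (EE n)) (x : EE n) : Prop :=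
  ∃ J ∈ 𝓒, J \ P = {x}

/-- Axiom (SC1). -/
def SC1 {n : ℕ} (𝓒 : Set (Finset (EE n))) : Prop := ∅ ∉ 𝓒

/-- Axiom (SC2). -/
def SC2 {n : ℕ} (𝓒 : Set (Finset (EE n))) : Prop :=
  ∀ C₁ ∈ 𝓒, ∀ C₂ ∈ 𝓒, C₁ ⊆ C₂ → C₁ = C₂

/-- Axiom (SC3): circuit elimination when the union is admissible. -/
def SC3 {n : ℕ} (𝓒 : Set (Finset (EE n))) : Prop :=
  ∀ C₁ ∈ 𝓒, ∀ C₂ ∈ 𝓒, C₁ ≠ C₂ → Admissible (C₁ ∪ C₂) →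
    ∀ x ∈ C₁ ∩ C₂, ∃ C ∈ 𝓒, C ⊆ (C₁ ∪ C₂) \ {x}

/-- Axiom (SC4): no small admissible set spans all of `E_{±n} − (P ∪ P*)`. -/
def SC4 {n : ℕ} (𝓒 : Set (Finset (EE n))) : Prop :=
  ∀ P : Finset (EE n), Admissible P → ∀ B ∈ BasesOf 𝓒, P.card < B.card →
    ∃ x, x ∉ P ∪ starSet P ∧ ¬ Spans 𝓒 P x


open scoped Classical

namespace SympAux

variable {n : ℕ}

lemma admissible_subset {S T : Finset (EE n)} (hST : S ⊆ T) (hT : Admissible T) :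
    Admissible S :=
  hT.mono hST (Finset.image_subset_image hST)

lemma forall₂_sum_le {l₁ l₂ : List ℕ} (h : List.Forall₂ (· ≤ ·) l₁ l₂) :
    l₁.sum ≤ l₂.sum := by
  induction h with
  | nil => simp
  | cons hab _ ih => simp only [List.sum_cons]; omega

lemma forall₂_eq_of_sum_eq {l₁ l₂ : List ℕ} (h : List.Forall₂ (· ≤ ·) l₁ l₂)
    (hs : l₁.sum = l₂.sum) : l₁ = l₂ := by
  induction h with
  | nil => rfl
  | cons hab h ih =>
    simp only [List.sum_cons] at hs
    have h2 := forall₂_sum_le h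
    have : _ = _ := ih (by omega)
    simp [this]; omega

lemma countP_le_of_forall₂ {l₁ l₂ : List ℕ} (h : List.Forall₂ (· ≤ ·) l₁ l₂) (t : ℕ) :
    l₁.countP (fun v => t ≤ v) ≤ l₂.countP (fun v => t ≤ v) := by
  induction h with
  | nil => simp
  | @cons a b la lb hab _ ih =>
    simp only [List.countP_cons]
    by_cases h1 : t ≤ a
    · have h2 := h1.trans hab
      simp [h1, h2]; omega
    · by_cases h2 : t ≤ b <;> simp [h1, h2] <;> omega

lemma card_filter_eq_countP (o : AdmOrdering n) (S : Finset (EE n)) (t : ℕ) :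
    (S.filter (fun e => t ≤ o.w e)).card
      = (Finset.sort (S.image o.w) (· ≤ ·)).countP (fun v => t ≤ v) := by
  calc (S.filter (fun e => t ≤ o.w e)).card
      = ((S.filter (fun e => t ≤ o.w e)).image o.w).card :=
        (Finset.card_image_of_injective _ o.inj).symm
    _ = ((S.image o.w).filter (fun v => t ≤ v)).card := by
        rw [Finset.filter_image]
    _ = Multiset.countP (fun v => t ≤ v) (S.image o.w).val := by
        rw [Multiset.countP_eq_card_filter, Finset.card_def, Finset.filter_val]
    _ = (Finset.sort (S.image o.w) (· ≤ ·)).countP (fun v => t ≤ v) := by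
        rw [← Finset.sort_eq (S.image o.w) (· ≤ ·), Multiset.coe_countP]

lemma filter_card_le (o : AdmOrdering n) {S T : Finset (EE n)} (h : setLE o S T) (t : ℕ) :
    (S.filter (fun e => t ≤ o.w e)).card ≤ (T.filter (fun e => t ≤ o.w e)).card := by
  rw [card_filter_eq_countP, card_filter_eq_countP]
  exact countP_le_of_forall₂ h t

lemma wsum_le (o : AdmOrdering n) {S T : Finset (EE n)} (h : setLE o S T) :
    (S.image o.w).sum id ≤ (T.image o.w).sum id := by
  have hs : ∀ U : Finset ℕ, (Finset.sort U (· ≤ ·)).sum = U.sum id := by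
    intro U
    rw [← Finset.sum_map_toList, List.map_id]
    exact ((Finset.sort_perm_toList U (· ≤ ·)).sum_eq)
  rw [← hs, ← hs]
  exact forall₂_sum_le h

lemma eq_of_setLE_sum (o : AdmOrdering n) {S T : Finset (EE n)} (h : setLE o S T)
    (hsum : (S.image o.w).sum id = (T.image o.w).sum id) : S = T := by
  have hs : ∀ U : Finset ℕ, (Finset.sort U (· ≤ ·)).sum = U.sum id := by
    intro U
    rw [← Finset.sum_map_toList, List.map_id]
    exact ((Finset.sort_perm_toList U (· ≤ ·)).sum_eq)
  have hl : Finset.sort (S.image o.w) (· ≤ ·) = Finset.sort (T.image o.w) (· ≤ ·) :=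
    forall₂_eq_of_sum_eq h (by rw [hs, hs]; exact hsum)
  have himg : S.image o.w = T.image o.w := by
    have := congrArg (fun l : List ℕ => (↑l : Multiset ℕ)) hl
    simp only [Finset.sort_eq] at this
    exact Finset.val_injective this
  exact Finset.image_injective o.inj himg

lemma forall₂_le_trans : ∀ {l₁ l₂ l₃ : List ℕ}, List.Forall₂ (· ≤ ·) l₁ l₂ →
    List.Forall₂ (· ≤ ·) l₂ l₃ → List.Forall₂ (· ≤ ·) l₁ l₃ := by
  intro l₁ l₂ l₃ h1 h2
  induction h1 generalizing l₃ with
  | nil => cases h2; exact List.Forall₂.nil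
  | @cons a b la lb hab h ih =>
    cases h2 with
    | cons hbc h2' => exact List.Forall₂.cons (hab.trans hbc) (ih h2')

lemma setLE_trans (o : AdmOrdering n) {S T U : Finset (EE n)} (h1 : setLE o S T)
    (h2 : setLE o T U) : setLE o S U := by
  unfold setLE at *
  exact forall₂_le_trans h1 h2

lemma setLE_refl (o : AdmOrdering n) (S : Finset (EE n)) : setLE o S S :=
  List.forall₂_same.mpr (fun a _ => le_refl a)

lemma exists_max {𝓑 : Set (Finset (EE n))} (h : IsSymplecticMatroid 𝓑)
    (o : AdmOrdering n) : ∃ M ∈ 𝓑, ∀ S ∈ 𝓑, setLE o S M := by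
  obtain ⟨M, ⟨hM, hMmax⟩, huniq⟩ := h.2.2.2 o
  refine ⟨M, hM, fun S hS => ?_⟩
  -- pick a maximizer of sum above S
  set F : Set (Finset (EE n)) := {U | U ∈ 𝓑 ∧ setLE o S U} with hF
  have hfin : F.Finite := Set.toFinite F
  have hne : F.Nonempty := ⟨S, hS, setLE_refl o S⟩
  obtain ⟨M₀, hM₀F, hM₀max⟩ := Set.Finite.exists_maximalFor (fun U => (U.image o.w).sum id) F hfin hne
  have hM₀ : M₀ ∈ 𝓑 := hM₀F.1
  have hmaxpred : ∀ Y ∈ 𝓑, setLE o M₀ Y → M₀ = Y := by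
    intro Y hY hle
    have hYF : Y ∈ F := ⟨hY, setLE_trans o hM₀F.2 hle⟩
    exact eq_of_setLE_sum o hle (le_antisymm (wsum_le o hle) (hM₀max hYF (wsum_le o hle)))
  have : M₀ = M := huniq M₀ ⟨hM₀, hmaxpred⟩
  rw [← this]
  exact hM₀F.2

lemma exists_ordering (A C₀ : Finset (EE n)) (hA : Admissible A) (hC : C₀ ⊆ A) :
    ∃ o : AdmOrdering n, (∀ e, e ∈ C₀ ↔ 5 * n ≤ o.w e) ∧ (∀ e, e ∈ A ↔ 4 * n ≤ o.w e) := by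
  classical
  have bool_ne1 : ∀ a b : Bool, ¬(a = b) → (!a) = b := by decide
  have bool_ne2 : ∀ a b : Bool, ¬(a = b) → a = !b := by decide
  have bool_ne3 : ∀ a b : Bool, a = b → ¬((!a) = b) := by decide
  set s : Fin n → Bool := fun i => decide ((i, true) ∈ A) with hs
  have hposA : ∀ e : EE n, e ∈ A → e.2 = s e.1 := by
    intro e he
    cases he2 : e.2 with
    | true =>
      have h1 : (e.1, true) ∈ A := by rw [← he2, Prod.mk.eta]; exact he
      simp [hs, h1]
    | false =>
      have h1 : (e.1, true) ∉ A := by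
        intro hmem
        have hst : estar e ∈ starSet A := Finset.mem_image_of_mem estar he
        have he' : estar e ∈ A := by
          have : estar e = (e.1, true) := by
            simp [estar, he2]
          rw [this]; exact hmem
        exact (Finset.disjoint_left.mp hA he') hst
      simp [hs, h1]
  set r : Fin n → ℕ := fun i => if (i, s i) ∈ C₀ then 2 else if (i, s i) ∈ A then 1 else 0
    with hr
  have hrcase : ∀ i : Fin n, (r i = 2 ∧ (i, s i) ∈ C₀) ∨ (r i = 1 ∧ (i, s i) ∈ A ∧ (i, s i) ∉ C₀)
      ∨ (r i = 0 ∧ (i, s i) ∉ A ∧ (i, s i) ∉ C₀) := by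
    intro i
    by_cases h1 : (i, s i) ∈ C₀
    · left; exact ⟨by simp [hr, h1], h1⟩
    · by_cases h2 : (i, s i) ∈ A
      · right; left; exact ⟨by simp [hr, h1, h2], h2, h1⟩
      · right; right; exact ⟨by simp [hr, h1, h2], h2, h1⟩
  set p : Fin n → ℕ := fun i => r i * n + i with hp
  have hpb : ∀ i : Fin n, p i ≤ 3 * n - 1 := by
    intro i
    have h1 := i.isLt
    have h2 : r i * n ≤ 2 * n := by
      rcases hrcase i with ⟨h, -⟩ | ⟨h, -⟩ | ⟨h, -⟩ <;> rw [h] <;> omega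
    simp only [hp]; omega
  have hpinj : ∀ i j : Fin n, p i = p j → i = j := by
    intro i j hij
    simp only [hp] at hij
    have hi := i.isLt
    have hj := j.isLt
    rcases Nat.lt_trichotomy (r i) (r j) with hlt | heq | hgt
    · exfalso
      have h1 : r i * n + ↑i < r j * n + ↑j := by
        calc r i * n + ↑i < r i * n + n := by omega
          _ = (r i + 1) * n := by ring
          _ ≤ r j * n := Nat.mul_le_mul_right n hlt
          _ ≤ r j * n + ↑j := Nat.le_add_right _ _
      omega
    · rw [heq] at hij
      exact Fin.ext (Nat.add_left_cancel hij)
    · exfalso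
      have h1 : r j * n + ↑j < r i * n + ↑i := by
        calc r j * n + ↑j < r j * n + n := by omega
          _ = (r j + 1) * n := by ring
          _ ≤ r i * n := Nat.mul_le_mul_right n hgt
          _ ≤ r i * n + ↑i := Nat.le_add_right _ _
      omega
  set w : EE n → ℕ := fun e => if e.2 = s e.1 then 3 * n + p e.1 else 3 * n - 1 - p e.1
    with hw
  have hwpos : ∀ e : EE n, e.2 = s e.1 → w e = 3 * n + p e.1 := by
    intro e he; simp only [hw, if_pos he]
  have hwneg : ∀ e : EE n, ¬ (e.2 = s e.1) → w e = 3 * n - 1 - p e.1 := by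
    intro e he; simp only [hw, if_neg he]
  have hstar : ∀ e : EE n, w (estar e) = 6 * n - 1 - w e := by
    intro e
    have hn : 0 < n := e.1.pos
    have hb := hpb e.1
    by_cases he : e.2 = s e.1
    · have h1 : ¬ ((estar e).2 = s (estar e).1) := bool_ne3 _ _ he
      rw [hwneg _ h1, hwpos _ he]
      simp only [estar]
      omega
    · have h1 : (estar e).2 = s (estar e).1 := bool_ne1 _ _ he
      rw [hwpos _ h1, hwneg _ he]
      simp only [estar]
      omega
  have hub : ∀ e : EE n, w e ≤ 6 * n - 1 := by
    intro e
    have hn : 0 < n := e.1.pos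
    have hb := hpb e.1
    by_cases he : e.2 = s e.1
    · rw [hwpos _ he]; omega
    · rw [hwneg _ he]; omega
  have hinj : Function.Injective w := by
    intro e f hef
    have hn : 0 < n := e.1.pos
    have hbe := hpb e.1
    have hbf := hpb f.1
    by_cases he : e.2 = s e.1 <;> by_cases hf : f.2 = s f.1
    · rw [hwpos _ he, hwpos _ hf] at hef
      have h1 : e.1 = f.1 := hpinj _ _ (by omega)
      have h2 : e.2 = f.2 := by rw [he, hf, h1]
      exact Prod.ext h1 h2
    · exfalso; rw [hwpos _ he, hwneg _ hf] at hef; omega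
    · exfalso; rw [hwneg _ he, hwpos _ hf] at hef; omega
    · rw [hwneg _ he, hwneg _ hf] at hef
      have h1 : e.1 = f.1 := hpinj _ _ (by omega)
      have h2 : e.2 = f.2 := by
        have he2 : e.2 = !(s e.1) := bool_ne2 _ _ he
        have hf2 : f.2 = !(s f.1) := bool_ne2 _ _ hf
        rw [he2, hf2, h1]
      exact Prod.ext h1 h2
  have hrev : ∀ a b : EE n, w a < w b → w (estar b) < w (estar a) := by
    intro a b hab
    have h1 := hstar a
    have h2 := hstar b
    have h3 := hub a
    have h4 := hub b
    omega
  refine ⟨⟨w, hinj, hrev⟩, ?_, ?_⟩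
  · intro e
    show e ∈ C₀ ↔ 5 * n ≤ w e
    constructor
    · intro he
      have heA : e ∈ A := hC he
      have hpos := hposA e heA
      have hee : (e.1, s e.1) = e := by rw [← hpos]
      rw [hwpos _ hpos]
      rcases hrcase e.1 with ⟨h, -⟩ | ⟨-, -, hnc⟩ | ⟨-, -, hnc⟩
      · simp only [hp, h]; omega
      · exact absurd (hee ▸ he) hnc
      · exact absurd (hee ▸ he) hnc
    · intro hwe
      have hn : 0 < n := e.1.pos
      have hb := hpb e.1
      have hi := e.1.isLt
      by_cases hpos : e.2 = s e.1
      · rw [hwpos _ hpos] at hwe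
        have hee : (e.1, s e.1) = e := by rw [← hpos]
        rcases hrcase e.1 with ⟨-, hm⟩ | ⟨h, -, -⟩ | ⟨h, -, -⟩
        · exact hee ▸ hm
        · exfalso; simp only [hp, h] at hwe; omega
        · exfalso; simp only [hp, h] at hwe; omega
      · exfalso; rw [hwneg _ hpos] at hwe; omega
  · intro e
    show e ∈ A ↔ 4 * n ≤ w e
    constructor
    · intro heA
      have hpos := hposA e heA
      have hee : (e.1, s e.1) = e := by rw [← hpos]
      rw [hwpos _ hpos]
      rcases hrcase e.1 with ⟨h, -⟩ | ⟨h, -, -⟩ | ⟨-, hna, -⟩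
      · simp only [hp, h]; omega
      · simp only [hp, h]; omega
      · exact absurd (hee ▸ heA) hna
    · intro hwe
      have hn : 0 < n := e.1.pos
      have hb := hpb e.1
      have hi := e.1.isLt
      by_cases hpos : e.2 = s e.1
      · rw [hwpos _ hpos] at hwe
        have hee : (e.1, s e.1) = e := by rw [← hpos]
        rcases hrcase e.1 with ⟨-, hm⟩ | ⟨-, hm, -⟩ | ⟨h, -, -⟩
        · exact hee ▸ hC hm
        · exact hee ▸ hm
        · exfalso; simp only [hp, h] at hwe; omega
      · exfalso; rw [hwneg _ hpos] at hwe; omega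

lemma exists_circuit_subset {𝓑 : Set (Finset (EE n))} :
    ∀ S : Finset (EE n), Admissible S → (∀ T ∈ 𝓑, ¬ S ⊆ T) → ∃ C ∈ Circuits 𝓑, C ⊆ S := by
  intro S
  induction S using Finset.strongInduction with
  | _ S ih =>
    intro hadm hnot
    by_cases hd : ∃ D, D ⊂ S ∧ ∀ T ∈ 𝓑, ¬ D ⊆ T
    · obtain ⟨D, hDS, hDnot⟩ := hd
      obtain ⟨C, hC, hCD⟩ := ih D hDS (admissible_subset hDS.subset hadm) hDnot
      exact ⟨C, hC, hCD.trans hDS.subset⟩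
    · push_neg at hd
      refine ⟨S, ⟨hadm, hnot, ?_⟩, subset_rfl⟩
      intro D hDS _
      exact hd D hDS

lemma key {𝓑 : Set (Finset (EE n))} (h : IsSymplecticMatroid 𝓑) {B : Finset (EE n)} (hB : B ∈ 𝓑)
    {x : EE n} (hx : x ∉ B) (hadm : Admissible (insert x B)) :
    ∀ T ∈ 𝓑, ¬ insert x (B.filter (fun b => insert x B \ {b} ∈ 𝓑)) ⊆ T := by
  intro T hT hsub
  set A := insert x B with hA
  set D := B.filter (fun b => A \ {b} ∈ 𝓑) with hD
  set C₀ := insert x D with hC₀def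
  have hDB : D ⊆ B := Finset.filter_subset _ _
  have hC₀A : C₀ ⊆ A := Finset.insert_subset_insert x hDB
  obtain ⟨o, h5, h4⟩ := exists_ordering A C₀ hadm hC₀A
  obtain ⟨M, hM, hMmax⟩ := exists_max h o
  have hcards := h.2.2.1
  have hkM : M.card = B.card := hcards M hM B hB
  have hfil5 : ∀ S : Finset (EE n), S.filter (fun e => 5 * n ≤ o.w e) = S ∩ C₀ := by
    intro S
    rw [← Finset.filter_mem_eq_inter]
    exact Finset.filter_congr (fun e _ => by rw [← h5 e])
  have hfil4 : ∀ S : Finset (EE n), S.filter (fun e => 4 * n ≤ o.w e) = S ∩ A := by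
    intro S
    rw [← Finset.filter_mem_eq_inter]
    exact Finset.filter_congr (fun e _ => by rw [← h4 e])
  -- C₀ ⊆ M
  have h1 : (T ∩ C₀).card ≤ (M ∩ C₀).card := by
    rw [← hfil5, ← hfil5]; exact filter_card_le o (hMmax T hT) (5 * n)
  have hTC : T ∩ C₀ = C₀ := Finset.inter_eq_right.mpr hsub
  have hMC : M ∩ C₀ = C₀ :=
    Finset.eq_of_subset_of_card_le Finset.inter_subset_right (by rw [hTC] at h1; exact h1)
  have hC₀M : C₀ ⊆ M := by
    intro a ha; rw [← hMC] at ha; exact (Finset.mem_inter.mp ha).1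
  -- M ⊆ A
  have h2 : (B ∩ A).card ≤ (M ∩ A).card := by
    rw [← hfil4, ← hfil4]; exact filter_card_le o (hMmax B hB) (4 * n)
  have hBA : B ∩ A = B := Finset.inter_eq_left.mpr (Finset.subset_insert x B)
  have hMAeq : M ∩ A = M := by
    apply Finset.eq_of_subset_of_card_le Finset.inter_subset_left
    rw [hBA] at h2; omega
  have hMA : M ⊆ A := by
    intro a ha; rw [← hMAeq] at ha; exact (Finset.mem_inter.mp ha).2
  -- extract b
  have hAcard : A.card = B.card + 1 := Finset.card_insert_of_notMem hx
  have hAM : (A \ M).card = 1 := by rw [Finset.card_sdiff_of_subset hMA]; omega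
  obtain ⟨b, hb⟩ := Finset.card_eq_one.mp hAM
  have hbAM : b ∈ A \ M := hb ▸ Finset.mem_singleton_self b
  have hbA : b ∈ A := (Finset.mem_sdiff.mp hbAM).1
  have hbM : b ∉ M := (Finset.mem_sdiff.mp hbAM).2
  have hxM : x ∈ M := hC₀M (Finset.mem_insert_self x D)
  have hbx : b ≠ x := fun hbe => hbM (hbe ▸ hxM)
  have hbB : b ∈ B := by
    rcases Finset.mem_insert.mp hbA with h' | h'
    · exact absurd h' hbx
    · exact h'
  have hMsub : M ⊆ A \ {b} := by
    intro a haM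
    rw [Finset.mem_sdiff, Finset.mem_singleton]
    exact ⟨hMA haM, fun hab => hbM (hab ▸ haM)⟩
  have hMeq : M = A \ {b} := by
    apply Finset.eq_of_subset_of_card_le hMsub
    rw [Finset.card_sdiff_of_subset (Finset.singleton_subset_iff.mpr hbA), Finset.card_singleton]
    omega
  have hAb : A \ {b} ∈ 𝓑 := hMeq ▸ hM
  have hbD : b ∈ D := Finset.mem_filter.mpr ⟨hbB, hAb⟩
  exact hbM (hC₀M (Finset.mem_insert_of_mem hbD))

end SympAux

open scoped Classical in
/-- if `B` is a basis, `x ∉ B` and `B ∪ {x}` is admissible, then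
`B ∪ {x}` contains a unique circuit, namely
`{x} ∪ {b ∈ B : B ∪ {x} − {b} ∈ 𝓑}`. -/
theorem unique_circuit_in_basis_extension {n : ℕ} (𝓑 : Set (Finset (EE n)))
    (h : IsSymplecticMatroid 𝓑) (B : Finset (EE n)) (hB : B ∈ 𝓑)
    (x : EE n) (hx : x ∉ B) (hadm : Admissible (insert x B)) :
    insert x (B.filter (fun b => insert x B \ {b} ∈ 𝓑)) ∈ Circuits 𝓑 ∧
    insert x (B.filter (fun b => insert x B \ {b} ∈ 𝓑)) ⊆ insert x B ∧
    ∀ C ∈ Circuits 𝓑, C ⊆ insert x B →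
      C = insert x (B.filter (fun b => insert x B \ {b} ∈ 𝓑)) := by
    classical
  have hDB : B.filter (fun b => insert x B \ {b} ∈ 𝓑) ⊆ B := Finset.filter_subset _ _
  have hC₀A : insert x (B.filter (fun b => insert x B \ {b} ∈ 𝓑)) ⊆ insert x B :=
    Finset.insert_subset_insert x hDB
  have hcards := h.2.2.1
  have hAnot : ∀ T ∈ 𝓑, ¬ insert x B ⊆ T := by
    intro T hT hsub
    have h1 : (insert x B).card ≤ T.card := Finset.card_le_card hsub
    have h2 : T.card = B.card := hcards T hT B hB
    rw [Finset.card_insert_of_notMem hx] at h1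
    have h3 : B.card ≤ (insert x B).card := Finset.card_le_card (Finset.subset_insert x B)
    rw [Finset.card_insert_of_notMem hx] at h3
    omega
  obtain ⟨C', hC', hC'A⟩ := SympAux.exists_circuit_subset (insert x B) hadm hAnot
  have hsubC : ∀ C ∈ Circuits 𝓑, C ⊆ insert x B →
      insert x (B.filter (fun b => insert x B \ {b} ∈ 𝓑)) ⊆ C := by
    intro C hC hCA
    obtain ⟨hCadm, hCnot, hCmin⟩ := hC
    have hxC : x ∈ C := by
      by_contra hxC
      have hCB : C ⊆ B := by
        intro a haC
        rcases Finset.mem_insert.mp (hCA haC) with h' | h'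
        · exact absurd (h' ▸ haC) hxC
        · exact h'
      exact hCnot B hB hCB
    intro a ha
    rcases Finset.mem_insert.mp ha with h' | h'
    · exact h' ▸ hxC
    · obtain ⟨haB, hab⟩ := Finset.mem_filter.mp h'
      by_contra haC
      have hsub' : C ⊆ insert x B \ {a} := by
        intro c hcC
        rw [Finset.mem_sdiff, Finset.mem_singleton]
        exact ⟨hCA hcC, fun hc => haC (hc ▸ hcC)⟩
      exact hCnot _ hab hsub'
  have hequal : ∀ C ∈ Circuits 𝓑, C ⊆ insert x B →
      C = insert x (B.filter (fun b => insert x B \ {b} ∈ 𝓑)) := by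
    intro C hC hCA
    by_contra hne
    have hss : insert x (B.filter (fun b => insert x B \ {b} ∈ 𝓑)) ⊂ C :=
      Finset.ssubset_iff_subset_ne.mpr ⟨hsubC C hC hCA, fun he => hne he.symm⟩
    obtain ⟨T, hT, hTs⟩ := hC.2.2 _ hss (SympAux.admissible_subset hC₀A hadm)
    exact SympAux.key h hB hx hadm T hT hTs
  have hCeq := hequal C' hC' hC'A
  exact ⟨hCeq ▸ hC', hC₀A, hequal⟩
end

section
/- Circuit elimination for symplectic matroids: let C₁, C₂ be distinct circuits of a symplectic matroid M with C₁ ∪ C₂ admissible and x ∈ C₁ ∩ C₂. Then there exists a circuit C of M with C ⊆ (C₁ ∪ C₂) − {x}. -/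
open Finset

namespace CircAux
variable {n : ℕ}

lemma estar_estar (e : EE n) : estar (estar e) = e := by
  simp [estar]

lemma admissible_mono {S T : Finset (EE n)} (hST : S ⊆ T) (hT : Admissible T) :
    Admissible S :=
  Disjoint.mono hST (Finset.image_subset_image hST) hT

lemma not_star_mem {T : Finset (EE n)} (hT : Admissible T) {e : EE n} (he : e ∈ T) :
    estar e ∉ T := fun h2 =>
  (Finset.disjoint_left.mp hT h2) (Finset.mem_image_of_mem estar he)

lemma exists_circuit_subset (𝓑 : Set (Finset (EE n))) :
    ∀ A : Finset (EE n), Admissible A → (∀ B ∈ 𝓑, ¬ A ⊆ B) →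
      ∃ C ∈ Circuits 𝓑, C ⊆ A := by
  intro A
  induction A using Finset.strongInduction with
  | _ A ih =>
    intro hA hdep
    by_cases hmin : ∀ D ⊂ A, Admissible D → ∃ B ∈ 𝓑, D ⊆ B
    · exact ⟨A, ⟨hA, hdep, hmin⟩, Finset.Subset.refl A⟩
    · push_neg at hmin
      obtain ⟨D, hDA, hDadm, hDdep⟩ := hmin
      obtain ⟨C, hC, hCD⟩ := ih D hDA hDadm hDdep
      exact ⟨C, hC, hCD.trans hDA.subset⟩

lemma f2_trans {l₁ l₂ l₃ : List ℕ} (h₁ : List.Forall₂ (· ≤ ·) l₁ l₂)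
    (h₂ : List.Forall₂ (· ≤ ·) l₂ l₃) : List.Forall₂ (· ≤ ·) l₁ l₃ := by
  induction h₁ generalizing l₃ with
  | nil => cases h₂; exact List.Forall₂.nil
  | cons hab h ih =>
    cases h₂ with
    | cons hbc h' => exact List.Forall₂.cons (le_trans hab hbc) (ih h')

lemma f2_sum_le {l₁ l₂ : List ℕ} (h : List.Forall₂ (· ≤ ·) l₁ l₂) : l₁.sum ≤ l₂.sum := by
  induction h with
  | nil => exact le_rfl
  | cons hab h ih => simp only [List.sum_cons]; omega

lemma f2_sum_lt {l₁ l₂ : List ℕ} (h : List.Forall₂ (· ≤ ·) l₁ l₂) (hne : l₁ ≠ l₂) :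
    l₁.sum < l₂.sum := by
  induction h with
  | nil => exact absurd rfl hne
  | @cons a b l₁' l₂' hab h ih =>
    simp only [List.sum_cons]
    by_cases hab' : a = b
    · subst hab'
      have hne' : l₁' ≠ l₂' := fun he => hne (by rw [he])
      have := ih hne'
      omega
    · have h1 := f2_sum_le h
      have h2 : a < b := lt_of_le_of_ne hab hab'
      omega

lemma f2_countP_le (t : ℕ) {l₁ l₂ : List ℕ} (h : List.Forall₂ (· ≤ ·) l₁ l₂) :
    l₁.countP (fun a => decide (t ≤ a)) ≤ l₂.countP (fun a => decide (t ≤ a)) := by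
  induction h with
  | nil => exact le_rfl
  | @cons a b l₁' l₂' hab h ih =>
    simp only [List.countP_cons, decide_eq_true_eq]
    by_cases h1 : t ≤ a
    · have h2 : t ≤ b := le_trans h1 hab
      simp only [h1, h2, if_true]
      omega
    · by_cases h2 : t ≤ b <;> simp only [h1, h2, if_true, if_false] <;> omega

lemma setLE_refl (o : AdmOrdering n) (A : Finset (EE n)) : setLE o A A :=
  List.forall₂_same.2 fun _ _ => le_rfl

lemma setLE_trans {o : AdmOrdering n} {A B C : Finset (EE n)} (h₁ : setLE o A B)
    (h₂ : setLE o B C) : setLE o A C := f2_trans h₁ h₂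

lemma eq_of_sort_image_eq {o : AdmOrdering n} {A B : Finset (EE n)}
    (h : Finset.sort (A.image o.w) (· ≤ ·) = Finset.sort (B.image o.w) (· ≤ ·)) : A = B := by
  have h2 : A.image o.w = B.image o.w := by
    rw [← Finset.sort_toFinset (s := A.image o.w) (r := (· ≤ ·)), h, Finset.sort_toFinset]
  exact Finset.image_injective o.inj h2

lemma exists_greatest {𝓑 : Set (Finset (EE n))} (h : IsSymplecticMatroid 𝓑)
    (o : AdmOrdering n) : ∃ M ∈ 𝓑, ∀ S ∈ 𝓑, setLE o S M := by
  obtain ⟨M, ⟨hM, hMmax⟩, huniq⟩ := h.2.2.2 o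
  refine ⟨M, hM, fun S hS => ?_⟩
  obtain ⟨T, hTF, hTmax⟩ := Set.Finite.exists_maximalFor
    (fun T => (Finset.sort (T.image o.w) (· ≤ ·)).sum) {T | T ∈ 𝓑 ∧ setLE o S T}
    (Set.toFinite _) ⟨S, hS, setLE_refl o S⟩
  have hTmax' : ∀ U ∈ 𝓑, setLE o T U → T = U := by
    intro U hU hTU
    by_contra hTU'
    have hUF : U ∈ {T | T ∈ 𝓑 ∧ setLE o S T} := ⟨hU, setLE_trans hTF.2 hTU⟩
    have hlistne : Finset.sort (T.image o.w) (· ≤ ·) ≠ Finset.sort (U.image o.w) (· ≤ ·) :=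
      fun he => hTU' (eq_of_sort_image_eq he)
    have hlt := f2_sum_lt hTU hlistne
    have : (Finset.sort (U.image o.w) (· ≤ ·)).sum ≤ (Finset.sort (T.image o.w) (· ≤ ·)).sum :=
      hTmax (j := U) hUF (le_of_lt hlt)
    omega
  have hTM : T = M := huniq T ⟨hTF.1, hTmax'⟩
  exact hTM ▸ hTF.2

lemma card_filter_eq_countP_toList {α : Type*} (s : Finset α) (p : α → Prop) [DecidablePred p] :
    (s.filter p).card = s.toList.countP (fun a => decide (p a)) := by
  have h1 : (s.filter p).card = Multiset.countP p s.val := by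
    rw [Finset.card_def, Finset.filter_val, Multiset.countP_eq_card_filter]
  have h2 : s.toList = s.val.toList := rfl
  rw [h1, h2]
  have h3 := Multiset.coe_countP p s.val.toList
  rw [Multiset.coe_toList] at h3
  rw [h3]

lemma card_filter_eq_countP_sort (t : ℕ) {w : EE n → ℕ} (hw : Function.Injective w)
    (S : Finset (EE n)) :
    (S.filter fun e => t ≤ w e).card
      = (Finset.sort (S.image w) (· ≤ ·)).countP (fun a => decide (t ≤ a)) := by
  have h1 : ((S.image w).filter fun a => t ≤ a) = (S.filter fun e => t ≤ w e).image w :=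
    Finset.filter_image
  have h2 : ((S.image w).filter fun a => t ≤ a).card = (S.filter fun e => t ≤ w e).card := by
    rw [h1, Finset.card_image_of_injective _ hw]
  rw [← h2, card_filter_eq_countP_toList,
    List.Perm.countP_eq _ (Finset.sort_perm_toList (s := S.image w) (r := (· ≤ ·)))]

lemma filter_card_le {o : AdmOrdering n} {S M : Finset (EE n)} (hle : setLE o S M) (t : ℕ) :
    (S.filter fun e => t ≤ o.w e).card ≤ (M.filter fun e => t ≤ o.w e).card := by
  rw [card_filter_eq_countP_sort t o.inj S, card_filter_eq_countP_sort t o.inj M]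
  exact f2_countP_le t hle


/-- Rank function realizing a prescribed "height" `g` on an admissible set `T`. -/
def gw (T : Finset (EE n)) (g : EE n → ℕ) (e : EE n) : ℕ :=
  if e ∈ T then (n + 1 + T.sup g) + (n + 1 + g e)
  else if estar e ∈ T then (n + 1 + T.sup g) - (n + 1 + g (estar e))
  else if e.2 = false then (n + 1 + T.sup g) + (e.1.val + 1)
  else (n + 1 + T.sup g) - (e.1.val + 1)

section gwlemmas
variable (T : Finset (EE n)) (g : EE n → ℕ)

lemma gw_mem {e : EE n} (h1 : e ∈ T) :
    gw T g e = (n + 1 + T.sup g) + (n + 1 + g e) := by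
  unfold gw; rw [if_pos h1]

lemma gw_star {e : EE n} (h1 : e ∉ T) (h2 : estar e ∈ T) :
    gw T g e = (n + 1 + T.sup g) - (n + 1 + g (estar e)) := by
  unfold gw; rw [if_neg h1, if_pos h2]

lemma gw_neitherF {e : EE n} (h1 : e ∉ T) (h2 : estar e ∉ T) (hb : e.2 = false) :
    gw T g e = (n + 1 + T.sup g) + (e.1.val + 1) := by
  unfold gw; rw [if_neg h1, if_neg h2, if_pos hb]

lemma gw_neitherT {e : EE n} (h1 : e ∉ T) (h2 : estar e ∉ T) (hb : e.2 = true) :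
    gw T g e = (n + 1 + T.sup g) - (e.1.val + 1) := by
  unfold gw; rw [if_neg h1, if_neg h2, if_neg (by simp [hb])]

lemma gw_le_not_mem {e : EE n} (h1 : e ∉ T) : gw T g e ≤ (n + 1 + T.sup g) + n := by
  by_cases h2 : estar e ∈ T
  · rw [gw_star T g h1 h2]; omega
  · have hfin : e.1.val < n := e.1.isLt
    rcases Bool.eq_false_or_eq_true e.2 with hb | hb
    · rw [gw_neitherT T g h1 h2 hb]; omega
    · rw [gw_neitherF T g h1 h2 hb]; omega

lemma gw_threshold {e f : EE n} (he : e ∈ T) :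
    gw T g e ≤ gw T g f ↔ (f ∈ T ∧ g e ≤ g f) := by
  rw [gw_mem T g he]
  constructor
  · intro hle
    by_cases hf : f ∈ T
    · rw [gw_mem T g hf] at hle
      exact ⟨hf, by omega⟩
    · have := gw_le_not_mem T g hf
      omega
  · rintro ⟨hf, hgf⟩
    rw [gw_mem T g hf]
    omega

lemma gw_add_star (hT : ∀ e ∈ T, estar e ∉ T) (e : EE n) :
    gw T g e + gw T g (estar e) = 2 * (n + 1 + T.sup g) := by
  by_cases h1 : e ∈ T
  · have h2 : estar e ∉ T := hT e h1
    have hb : g e ≤ T.sup g := Finset.le_sup h1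
    rw [gw_mem T g h1, gw_star T g h2 (by rw [estar_estar]; exact h1), estar_estar]
    omega
  · by_cases h2 : estar e ∈ T
    · have hb : g (estar e) ≤ T.sup g := Finset.le_sup h2
      rw [gw_star T g h1 h2, gw_mem T g h2]
      omega
    · have h3 : estar (estar e) ∉ T := by rw [estar_estar]; exact h1
      have hfin : e.1.val < n := e.1.isLt
      rcases Bool.eq_false_or_eq_true e.2 with hb | hb
      · have hb' : (estar e).2 = false := by simp [estar, hb]
        rw [gw_neitherT T g h1 h2 hb, gw_neitherF T g h2 h3 hb']
        have he1 : (estar e).1 = e.1 := rfl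
        rw [he1]; omega
      · have hb' : (estar e).2 = true := by simp [estar, hb]
        rw [gw_neitherF T g h1 h2 hb, gw_neitherT T g h2 h3 hb']
        have he1 : (estar e).1 = e.1 := rfl
        rw [he1]; omega

lemma gw_inj (hT : ∀ e ∈ T, estar e ∉ T)
    (ginj : ∀ e ∈ T, ∀ f ∈ T, g e = g f → e = f) :
    Function.Injective (gw T g) := by
  intro e f hef
  by_cases h1e : e ∈ T <;> by_cases h1f : f ∈ T
  · rw [gw_mem T g h1e, gw_mem T g h1f] at hef
    exact ginj e h1e f h1f (by omega)
  · rw [gw_mem T g h1e] at hef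
    have := gw_le_not_mem T g h1f
    omega
  · rw [gw_mem T g h1f] at hef
    have := gw_le_not_mem T g h1e
    omega
  · -- neither in T
    have hfine : e.1.val < n := e.1.isLt
    have hfinf : f.1.val < n := f.1.isLt
    by_cases h2e : estar e ∈ T <;> by_cases h2f : estar f ∈ T
    · rw [gw_star T g h1e h2e, gw_star T g h1f h2f] at hef
      have hbe : g (estar e) ≤ T.sup g := Finset.le_sup h2e
      have hbf : g (estar f) ≤ T.sup g := Finset.le_sup h2f
      have : estar e = estar f := ginj _ h2e _ h2f (by omega)
      have := congrArg estar this
      rwa [estar_estar, estar_estar] at this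
    · -- estar e ∈ T, f neither
      rw [gw_star T g h1e h2e] at hef
      rcases Bool.eq_false_or_eq_true f.2 with hb | hb
      · rw [gw_neitherT T g h1f h2f hb] at hef
        have hbe : g (estar e) ≤ T.sup g := Finset.le_sup h2e
        omega
      · rw [gw_neitherF T g h1f h2f hb] at hef; omega
    · rw [gw_star T g h1f h2f] at hef
      rcases Bool.eq_false_or_eq_true e.2 with hb | hb
      · rw [gw_neitherT T g h1e h2e hb] at hef
        have hbf : g (estar f) ≤ T.sup g := Finset.le_sup h2f
        omega
      · rw [gw_neitherF T g h1e h2e hb] at hef; omega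
    · -- both neither
      rcases Bool.eq_false_or_eq_true e.2 with hbe | hbe <;>
        rcases Bool.eq_false_or_eq_true f.2 with hbf | hbf
      · rw [gw_neitherT T g h1e h2e hbe, gw_neitherT T g h1f h2f hbf] at hef
        have h1 : e.1 = f.1 := Fin.ext (by omega)
        exact Prod.ext h1 (hbe.trans hbf.symm)
      · rw [gw_neitherT T g h1e h2e hbe, gw_neitherF T g h1f h2f hbf] at hef; omega
      · rw [gw_neitherF T g h1e h2e hbe, gw_neitherT T g h1f h2f hbf] at hef; omega
      · rw [gw_neitherF T g h1e h2e hbe, gw_neitherF T g h1f h2f hbf] at hef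
        have h1 : e.1 = f.1 := Fin.ext (by omega)
        exact Prod.ext h1 (hbe.trans hbf.symm)

lemma gw_rev (hT : ∀ e ∈ T, estar e ∉ T) (x y : EE n) (hxy : gw T g x < gw T g y) :
    gw T g (estar y) < gw T g (estar x) := by
  have h1 := gw_add_star T g hT x
  have h2 := gw_add_star T g hT y
  omega

end gwlemmas

/-- The admissible ordering realizing `g` on `T`. -/
def gOrd (T : Finset (EE n)) (hT : ∀ e ∈ T, estar e ∉ T) (g : EE n → ℕ)
    (ginj : ∀ e ∈ T, ∀ f ∈ T, g e = g f → e = f) : AdmOrdering n :=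
  ⟨gw T g, gw_inj T g hT ginj, gw_rev T g hT⟩

lemma greedy {𝓑 : Set (Finset (EE n))} (h : IsSymplecticMatroid 𝓑)
    (T : Finset (EE n)) (hadm : Admissible T) (g : EE n → ℕ)
    (ginj : ∀ e ∈ T, ∀ f ∈ T, g e = g f → e = f) :
    ∃ M ∈ 𝓑, ∀ S ∈ 𝓑, ∀ e ∈ T,
      (S.filter fun f => f ∈ T ∧ g e ≤ g f).card
        ≤ (M.filter fun f => f ∈ T ∧ g e ≤ g f).card := by
  have hT : ∀ e ∈ T, estar e ∉ T := fun e he => not_star_mem hadm he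
  obtain ⟨M, hM, hMg⟩ := exists_greatest h (gOrd T hT g ginj)
  refine ⟨M, hM, fun S hS e he => ?_⟩
  have key := filter_card_le (hMg S hS) (gw T g e)
  have hw : (gOrd T hT g ginj).w = gw T g := rfl
  rw [hw] at key
  have hiff : ∀ x : Finset (EE n),
      (x.filter fun f => gw T g e ≤ gw T g f) = x.filter fun f => f ∈ T ∧ g e ≤ g f :=
    fun x => Finset.filter_congr (fun f _ => gw_threshold T g he)
  rw [hiff S, hiff M] at key
  exact key


lemma elim_aux (𝓑 : Set (Finset (EE n))) (h : IsSymplecticMatroid 𝓑) :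
    ∀ N : ℕ, ∀ C₁ C₂ : Finset (EE n), ∀ x : EE n,
      C₁ ∈ Circuits 𝓑 → C₂ ∈ Circuits 𝓑 → C₁ ≠ C₂ → Admissible (C₁ ∪ C₂) →
      x ∈ C₁ → x ∈ C₂ → (C₁ ∪ C₂).card ≤ N →
      ∃ C ∈ Circuits 𝓑, C ⊆ (C₁ ∪ C₂) \ {x} := by
  intro N
  induction N with
  | zero =>
    intro C₁ C₂ x _ _ _ _ hx1 _ hcard
    have hu : C₁ ∪ C₂ = ∅ := Finset.card_eq_zero.mp (Nat.le_zero.mp hcard)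
    exact absurd (Finset.mem_union_left C₂ hx1) (by simp [hu])
  | succ N ih =>
    intro C₁ C₂ x hC₁ hC₂ hne hadm hx1 hx2 hcard
    by_cases hdep : ∀ B ∈ 𝓑, ¬ ((C₁ ∪ C₂) \ {x}) ⊆ B
    · exact exists_circuit_subset 𝓑 ((C₁ ∪ C₂) \ {x})
        (admissible_mono Finset.sdiff_subset hadm) hdep
    · push_neg at hdep
      obtain ⟨B, hB, hBsub⟩ := hdep
      have hxu : x ∈ C₁ ∪ C₂ := Finset.mem_union_left C₂ hx1
      have hxB : x ∉ B := by
        intro hxB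
        refine hC₁.2.1 B hB (fun e heC₁ => ?_)
        by_cases hex : e = x
        · rw [hex]; exact hxB
        · exact hBsub (Finset.mem_sdiff.mpr
            ⟨Finset.mem_union_left _ heC₁, by simp [hex]⟩)
      have hy : ∃ y, y ∈ C₁ ∧ y ∉ C₂ := by
        by_contra hcon
        push_neg at hcon
        have hsub12 : C₁ ⊆ C₂ := fun e he => hcon e he
        obtain ⟨B', hB', hB'sub⟩ := hC₂.2.2 C₁ (hsub12.ssubset_of_ne hne) hC₁.1
        exact hC₁.2.1 B' hB' hB'sub
      obtain ⟨y, hyC₁, hyC₂⟩ := hy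
      have hz : ∃ z, z ∈ C₂ ∧ z ∉ C₁ := by
        by_contra hcon
        push_neg at hcon
        have hsub21 : C₂ ⊆ C₁ := fun e he => hcon e he
        obtain ⟨B', hB', hB'sub⟩ := hC₁.2.2 C₂ (hsub21.ssubset_of_ne hne.symm) hC₂.1
        exact hC₂.2.1 B' hB' hB'sub
      obtain ⟨z, hzC₂, hzC₁⟩ := hz
      have hxy : y ≠ x := fun hh => hyC₂ (hh ▸ hx2)
      have hxz : z ≠ x := fun hh => hzC₁ (hh ▸ hx1)
      have hyz : y ≠ z := fun hh => hzC₁ (hh ▸ hyC₁)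
      have hyu : y ∈ C₁ ∪ C₂ := Finset.mem_union_left _ hyC₁
      have hzu : z ∈ C₁ ∪ C₂ := Finset.mem_union_right _ hzC₂
      have hRadm : Admissible ((C₁ ∪ C₂) \ {y, z}) :=
        admissible_mono Finset.sdiff_subset hadm
      by_cases hRdep : ∀ B'' ∈ 𝓑, ¬ ((C₁ ∪ C₂) \ {y, z}) ⊆ B''
      · obtain ⟨C₃, hC₃, hC₃R⟩ := exists_circuit_subset 𝓑 _ hRadm hRdep
        have hC₃u : C₃ ⊆ C₁ ∪ C₂ := hC₃R.trans Finset.sdiff_subset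
        have hxC₃ : x ∈ C₃ := by
          by_contra hxC₃
          refine hC₃.2.1 B hB (fun e he => ?_)
          refine hBsub (Finset.mem_sdiff.mpr ⟨hC₃u he, ?_⟩)
          simp only [Finset.mem_singleton]
          intro hex; rw [hex] at he; exact hxC₃ he
        have hyC₃ : y ∉ C₃ := fun hh =>
          (Finset.mem_sdiff.mp (hC₃R hh)).2 (by simp)
        have hzC₃ : z ∉ C₃ := fun hh =>
          (Finset.mem_sdiff.mp (hC₃R hh)).2 (by simp)
        have hC₃ne : C₁ ≠ C₃ := fun hh => hyC₃ (hh ▸ hyC₁)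
        have hsub13 : C₁ ∪ C₃ ⊆ (C₁ ∪ C₂) \ {z} := by
          intro e he
          refine Finset.mem_sdiff.mpr ⟨?_, ?_⟩
          · rcases Finset.mem_union.mp he with h' | h'
            · exact Finset.mem_union_left _ h'
            · exact hC₃u h'
          · simp only [Finset.mem_singleton]
            intro hez
            rw [hez] at he
            rcases Finset.mem_union.mp he with h' | h'
            · exact hzC₁ h'
            · exact hzC₃ h'
        have hadm13 : Admissible (C₁ ∪ C₃) :=
          admissible_mono (hsub13.trans Finset.sdiff_subset) hadm
        have hcard13 : (C₁ ∪ C₃).card ≤ N := by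
          have h1 : (C₁ ∪ C₃).card ≤ ((C₁ ∪ C₂) \ {z}).card := Finset.card_le_card hsub13
          have h2 : ((C₁ ∪ C₂) \ {z}).card = (C₁ ∪ C₂).card - 1 := by
            rw [Finset.card_sdiff_of_subset (Finset.singleton_subset_iff.mpr hzu), Finset.card_singleton]
          have h3 : 1 ≤ (C₁ ∪ C₂).card := Finset.card_pos.mpr ⟨x, hxu⟩
          omega
        obtain ⟨C, hC, hCsub⟩ := ih C₁ C₃ x hC₁ hC₃ hC₃ne hadm13 hx1 hxC₃ hcard13
        refine ⟨C, hC, fun e he => ?_⟩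
        have h1 := Finset.mem_sdiff.mp (hCsub he)
        refine Finset.mem_sdiff.mpr ⟨?_, h1.2⟩
        rcases Finset.mem_union.mp h1.1 with h' | h'
        · exact Finset.mem_union_left _ h'
        · exact hC₃u h'
      · push_neg at hRdep
        obtain ⟨B', hB', hB'R⟩ := hRdep
        exfalso
        set g : EE n → ℕ := fun e =>
          if e = x then 2 else if e = y then 1 else if e = z then 0
          else 3 + (2 * e.1.val + (if e.2 then 1 else 0)) with hgdef
        have hgx : g x = 2 := by simp [hgdef]
        have hgy : g y = 1 := by simp [hgdef, hxy]
        have hgz : g z = 0 := by simp [hgdef, hxz, hyz.symm]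
        have hgother : ∀ e : EE n, e ≠ x → e ≠ y → e ≠ z → 3 ≤ g e := by
          intro e h1 h2 h3; simp [hgdef, h1, h2, h3]
        have ginj : ∀ e ∈ C₁ ∪ C₂, ∀ f ∈ C₁ ∪ C₂, g e = g f → e = f := by
          intro e _ f _ hef
          simp only [hgdef] at hef
          split_ifs at hef with p1 p2 p3 p4 p5 p6 p7 p8 p9 p10 p11 p12 p13 p14 p15
          all_goals try (subst_vars; rfl)
          all_goals try omega
          all_goals exact Prod.ext (Fin.ext (by omega)) (by simp_all)
        obtain ⟨M, hM, hMg⟩ := greedy h (C₁ ∪ C₂) hadm g ginj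
        -- Step 1: R ⊆ M
        have h1 := hMg B' hB' x hxu
        have hBf : (C₁ ∪ C₂) \ {y, z} ⊆ B'.filter fun f => f ∈ C₁ ∪ C₂ ∧ g x ≤ g f := by
          intro f hf
          obtain ⟨hfu, hfyz⟩ := Finset.mem_sdiff.mp hf
          simp only [Finset.mem_insert, Finset.mem_singleton] at hfyz
          push_neg at hfyz
          refine Finset.mem_filter.mpr ⟨hB'R hf, hfu, ?_⟩
          rw [hgx]
          by_cases hfx : f = x
          · rw [hfx, hgx]
          · have := hgother f hfx hfyz.1 hfyz.2; omega
        have hMf1 : (M.filter fun f => f ∈ C₁ ∪ C₂ ∧ g x ≤ g f) ⊆ (C₁ ∪ C₂) \ {y, z} := by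
          intro f hf
          obtain ⟨_, hfu, hgf⟩ := Finset.mem_filter.mp hf
          rw [hgx] at hgf
          refine Finset.mem_sdiff.mpr ⟨hfu, ?_⟩
          simp only [Finset.mem_insert, Finset.mem_singleton]
          push_neg
          constructor
          · intro hfy; rw [hfy, hgy] at hgf; omega
          · intro hfz; rw [hfz, hgz] at hgf; omega
        have hRM : (C₁ ∪ C₂) \ {y, z} ⊆ M := by
          have hcard1 : ((C₁ ∪ C₂) \ {y, z}).card
              ≤ (M.filter fun f => f ∈ C₁ ∪ C₂ ∧ g x ≤ g f).card :=
            le_trans (Finset.card_le_card hBf) h1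
          have hReq := Finset.eq_of_subset_of_card_le hMf1 hcard1
          intro f hf
          rw [← hReq] at hf
          exact (Finset.mem_filter.mp hf).1
        -- y ∉ M and z ∉ M
        have hyM : y ∉ M := by
          intro hyM
          refine hC₁.2.1 M hM (fun e he => ?_)
          by_cases hey : e = y
          · rw [hey]; exact hyM
          · refine hRM (Finset.mem_sdiff.mpr ⟨Finset.mem_union_left _ he, ?_⟩)
            simp only [Finset.mem_insert, Finset.mem_singleton]
            push_neg
            exact ⟨hey, fun hez => hzC₁ (hez ▸ he)⟩
        have hzM : z ∉ M := by
          intro hzM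
          refine hC₂.2.1 M hM (fun e he => ?_)
          by_cases hez : e = z
          · rw [hez]; exact hzM
          · refine hRM (Finset.mem_sdiff.mpr ⟨Finset.mem_union_right _ he, ?_⟩)
            simp only [Finset.mem_insert, Finset.mem_singleton]
            push_neg
            exact ⟨fun hey => hyC₂ (hey ▸ he), hez⟩
        -- Step 2: contradiction via counting with threshold z
        have h3 := hMg B hB z hzu
        have hB3 : (C₁ ∪ C₂) \ {x} ⊆ B.filter fun f => f ∈ C₁ ∪ C₂ ∧ g z ≤ g f := by
          intro f hf
          exact Finset.mem_filter.mpr ⟨hBsub hf, (Finset.mem_sdiff.mp hf).1,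
            by rw [hgz]; omega⟩
        have hM3 : (M.filter fun f => f ∈ C₁ ∪ C₂ ∧ g z ≤ g f) ⊆ (C₁ ∪ C₂) \ {y, z} := by
          intro f hf
          obtain ⟨hfM, hfu, _⟩ := Finset.mem_filter.mp hf
          refine Finset.mem_sdiff.mpr ⟨hfu, ?_⟩
          simp only [Finset.mem_insert, Finset.mem_singleton]
          push_neg
          exact ⟨fun hfy => hyM (hfy ▸ hfM), fun hfz => hzM (hfz ▸ hfM)⟩
        have c1 : ((C₁ ∪ C₂) \ {x}).card = (C₁ ∪ C₂).card - 1 := by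
          rw [Finset.card_sdiff_of_subset (Finset.singleton_subset_iff.mpr hxu), Finset.card_singleton]
        have c2 : ((C₁ ∪ C₂) \ {y, z}).card = (C₁ ∪ C₂).card - 2 := by
          rw [Finset.card_sdiff_of_subset]
          · rw [Finset.card_pair hyz]
          · intro f hf
            simp only [Finset.mem_insert, Finset.mem_singleton] at hf
            rcases hf with hf | hf
            · rw [hf]; exact hyu
            · rw [hf]; exact hzu
        have c3 : 2 ≤ (C₁ ∪ C₂).card := by
          have : ({x, y} : Finset (EE n)) ⊆ C₁ ∪ C₂ := by
            intro f hf
            simp only [Finset.mem_insert, Finset.mem_singleton] at hf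
            rcases hf with hf | hf
            · rw [hf]; exact hxu
            · rw [hf]; exact hyu
          have := Finset.card_le_card this
          rw [Finset.card_pair (Ne.symm hxy)] at this
          omega
        have d1 := Finset.card_le_card hB3
        have d2 := Finset.card_le_card hM3
        omega

end CircAux

/-- circuit elimination: distinct circuits with admissible union
admit elimination of a common element. -/
theorem circuits_SC3 {n : ℕ} (𝓑 : Set (Finset (EE n)))
    (h : IsSymplecticMatroid 𝓑) (C₁ : Finset (EE n)) (hC₁ : C₁ ∈ Circuits 𝓑)
    (C₂ : Finset (EE n)) (hC₂ : C₂ ∈ Circuits 𝓑) (hne : C₁ ≠ C₂)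
    (hadm : Admissible (C₁ ∪ C₂)) (x : EE n) (hx : x ∈ C₁ ∩ C₂) :
    ∃ C ∈ Circuits 𝓑, C ⊆ (C₁ ∪ C₂) \ {x} := by
  obtain ⟨hx1, hx2⟩ := Finset.mem_inter.mp hx
  exact CircAux.elim_aux 𝓑 h ((C₁ ∪ C₂).card) C₁ C₂ x hC₁ hC₂ hne hadm hx1 hx2 le_rfl
end

section
/- Strong circuit elimination for symplectic matroids: let C₁, C₂ be distinct circuits of a symplectic matroid with C₁ ∪ C₂ admissible and x ∈ C₁ ∩ C₂. Then for every c ∈ C₁ Δ C₂, there exists a circuit C_c with c ∈ C_c ⊆ (C₁ ∪ C₂) − {x}. -/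
open Finset

-- basic helper lemmas test
section Helpers
open List
variable {n : ℕ}

lemma admissible_subset {S T : Finset (EE n)} (hST : T ⊆ S) (hS : Admissible S) :
    Admissible T := by
  refine Finset.disjoint_left.2 fun a haT hastar => ?_
  have hd := Finset.disjoint_left.1 hS (hST haT)
  apply hd
  obtain ⟨b, hb, rfl⟩ := Finset.mem_image.1 hastar
  exact Finset.mem_image.2 ⟨b, hST hb, rfl⟩

lemma exists_circuit_of_dep (𝓑 : Set (Finset (EE n))) :
    ∀ A : Finset (EE n), Admissible A → (∀ B ∈ 𝓑, ¬ A ⊆ B) →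
      ∃ C ∈ Circuits 𝓑, C ⊆ A := by
  intro A
  induction A using Finset.strongInductionOn with
  | _ A ih =>
    intro hadm hdep
    by_cases hA : ∀ D ⊂ A, Admissible D → ∃ B ∈ 𝓑, D ⊆ B
    · exact ⟨A, ⟨hadm, hdep, hA⟩, Finset.Subset.refl A⟩
    · push_neg at hA
      obtain ⟨D, hDA, hDadm, hDdep⟩ := hA
      obtain ⟨C, hC, hCD⟩ := ih D hDA hDadm hDdep
      exact ⟨C, hC, hCD.trans hDA.subset⟩

lemma forall2_trans {l1 l2 l3 : List ℕ} (h12 : List.Forall₂ (· ≤ ·) l1 l2)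
    (h23 : List.Forall₂ (· ≤ ·) l2 l3) : List.Forall₂ (· ≤ ·) l1 l3 := by
  induction h12 generalizing l3 with
  | nil => cases h23; exact .nil
  | cons h _ ih => cases h23 with | cons h' t' => exact .cons (h.trans h') (ih t')

lemma forall2_sum_le {l1 l2 : List ℕ} (h : List.Forall₂ (· ≤ ·) l1 l2) : l1.sum ≤ l2.sum := by
  induction h with
  | nil => simp
  | cons h _ ih => simp only [List.sum_cons]; omega

lemma forall2_eq_of_sum {l1 l2 : List ℕ} (h : List.Forall₂ (· ≤ ·) l1 l2)
    (hs : l2.sum ≤ l1.sum) : l1 = l2 := by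
  induction h with
  | nil => rfl
  | cons h htl ih =>
    simp only [List.sum_cons] at hs
    have h1 := forall2_sum_le htl
    have : _ = _ := ih (by omega)
    rw [this]
    congr 1
    omega

lemma forall2_countP {l1 l2 : List ℕ} (t : ℕ) (h : List.Forall₂ (· ≤ ·) l1 l2) :
    l1.countP (fun a => t ≤ a) ≤ l2.countP (fun a => t ≤ a) := by
  induction h with
  | nil => simp
  | @cons a b _ _ h _ ih =>
    simp only [List.countP_cons]
    by_cases h1 : t ≤ a
    · have h2 : t ≤ b := h1.trans h
      simp [h1, h2]; omega
    · by_cases h2 : t ≤ b <;> simp [h1, h2] <;> omega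

end Helpers
section SetLE
variable {n : ℕ}

lemma sort_sum (s : Finset ℕ) : (Finset.sort s (· ≤ ·)).sum = ∑ v ∈ s, v := by
  have h1 : ((Finset.sort s (· ≤ ·) : List ℕ) : Multiset ℕ) = s.val := Finset.sort_eq (s := s) (r := (· ≤ ·))
  calc (Finset.sort s (· ≤ ·)).sum = ((Finset.sort s (· ≤ ·) : List ℕ) : Multiset ℕ).sum := by
        rw [Multiset.sum_coe]
    _ = s.val.sum := by rw [h1]
    _ = ∑ v ∈ s, v := by rw [Finset.sum]; simp

lemma sort_countP (s : Finset ℕ) (p : ℕ → Prop) [DecidablePred p] :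
    (Finset.sort s (· ≤ ·)).countP (fun a => p a) = (s.filter p).card := by
  have h1 : ((Finset.sort s (· ≤ ·) : List ℕ) : Multiset ℕ) = s.val := Finset.sort_eq (s := s) (r := (· ≤ ·))
  calc (Finset.sort s (· ≤ ·)).countP (fun a => p a)
      = Multiset.countP (fun a => p a) ((Finset.sort s (· ≤ ·) : List ℕ) : Multiset ℕ) := by
        rw [Multiset.coe_countP]
    _ = Multiset.countP (fun a => p a) s.val := by rw [h1]
    _ = (s.filter p).card := by rw [Multiset.countP_eq_card_filter]; rfl

lemma setLE_refl (o : AdmOrdering n) (A : Finset (EE n)) : setLE o A A := by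
  exact List.forall₂_same.2 (fun x _ => le_refl x)

lemma setLE_sum_le (o : AdmOrdering n) {A B : Finset (EE n)} (h : setLE o A B) :
    ∑ a ∈ A, o.w a ≤ ∑ b ∈ B, o.w b := by
  have := forall2_sum_le h
  rwa [sort_sum, sort_sum, Finset.sum_image (fun a _ b _ => fun hw => o.inj hw),
    Finset.sum_image (fun a _ b _ => fun hw => o.inj hw)] at this

lemma setLE_eq (o : AdmOrdering n) {A B : Finset (EE n)} (h : setLE o A B)
    (hs : ∑ b ∈ B, o.w b ≤ ∑ a ∈ A, o.w a) : A = B := by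
  have hs' : (Finset.sort (B.image o.w) (· ≤ ·)).sum ≤ (Finset.sort (A.image o.w) (· ≤ ·)).sum := by
    rw [sort_sum, sort_sum, Finset.sum_image (fun a _ b _ => fun hw => o.inj hw),
      Finset.sum_image (fun a _ b _ => fun hw => o.inj hw)]
    exact hs
  have heq := forall2_eq_of_sum h hs'
  have himg : A.image o.w = B.image o.w := by
    have : (A.image o.w).val = (B.image o.w).val := by
      rw [← Finset.sort_eq (s := A.image o.w) (r := (· ≤ ·)), ← Finset.sort_eq (s := B.image o.w) (r := (· ≤ ·)), heq]
    exact Finset.val_injective this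
  exact Finset.image_injective o.inj himg

lemma setLE_count (o : AdmOrdering n) {A B : Finset (EE n)} (h : setLE o A B) (t : ℕ) :
    (A.filter (fun a => t ≤ o.w a)).card ≤ (B.filter (fun a => t ≤ o.w a)).card := by
  have := forall2_countP t h
  rw [sort_countP, sort_countP] at this
  rwa [Finset.filter_image, Finset.card_image_of_injective _ o.inj,
    Finset.filter_image, Finset.card_image_of_injective _ o.inj] at this

end SetLE
section MaxLemma
variable {n : ℕ} {𝓑 : Set (Finset (EE n))}

lemma exists_greatest (h : IsSymplecticMatroid 𝓑) (o : AdmOrdering n) :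
    ∃ M ∈ 𝓑, ∀ S ∈ 𝓑, setLE o S M := by
  obtain ⟨hne, hadm, hcard, hmax⟩ := h
  obtain ⟨M, ⟨hM, hMmax⟩, huniq⟩ := hmax o
  refine ⟨M, hM, fun S hS => ?_⟩
  set T : Set (Finset (EE n)) := {B | B ∈ 𝓑 ∧ setLE o S B} with hT
  have hTfin : T.Finite := Set.toFinite T
  have hTne : T.Nonempty := ⟨S, hS, setLE_refl o S⟩
  obtain ⟨B₀, hB₀T, hB₀max⟩ :=
    Set.Finite.exists_maximalFor (fun B => ∑ b ∈ B, o.w b) T hTfin hTne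
  have hB₀ : B₀ ∈ 𝓑 := hB₀T.1
  have hB₀maxel : ∀ S' ∈ 𝓑, setLE o B₀ S' → B₀ = S' := by
    intro S' hS' hle
    have hS'T : S' ∈ T := ⟨hS', forall2_trans hB₀T.2 hle⟩
    have hsum := setLE_sum_le o hle
    have heq := le_antisymm hsum (hB₀max hS'T hsum)
    exact setLE_eq o hle (le_of_eq heq.symm)
  have hBM : B₀ = M := huniq B₀ ⟨hB₀, hB₀maxel⟩
  rw [← hBM]
  exact hB₀T.2

end MaxLemma
section Ordering
variable {n : ℕ}

lemma not_both_mem {S : Finset (EE n)} (hS : Admissible S) (i : Fin n)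
    (h1 : (i, true) ∈ S) (h0 : (i, false) ∈ S) : False := by
  have : (i, false) ∈ starSet S := Finset.mem_image.2 ⟨(i, true), h1, rfl⟩
  exact Finset.disjoint_left.1 hS h0 this

lemma exists_ordering (hn : 0 < n) (S I : Finset (EE n)) (hIS : I ⊆ S) (hS : Admissible S) :
    ∃ o : AdmOrdering n,
      (∀ z, 5 * n + 1 ≤ o.w z ↔ z ∈ I) ∧
      (∀ z, 4 * n + 1 ≤ o.w z → z ∈ S) ∧
      (∀ j ∈ S, 4 * n + 1 ≤ o.w j) := by
  classical
  set sg : Fin n → Bool := fun i => decide ((i, true) ∈ S) with hsg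
  -- elements of S have their coordinate's chosen sign
  have hsgS : ∀ i b, (i, b) ∈ S → b = sg i := by
    intro i b hb
    rw [hsg]; dsimp only
    cases b with
    | true => simp [hb]
    | false =>
      by_cases ht : (i, true) ∈ S
      · exact absurd (not_both_mem hS i ht hb) (fun h => h)
      · simp [ht]
  set κ : Fin n → ℕ := fun i =>
    if (i, sg i) ∈ I then 2 else if (i, sg i) ∈ S then 1 else 0 with hκ
  set p : Fin n → ℕ := fun i => κ i * n + i.val with hp
  have hκ2 : ∀ i, κ i ≤ 2 := by
    intro i; rw [hκ]; dsimp only; split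
    · omega
    · split <;> omega
  have hpb : ∀ i, p i ≤ 3 * n - 1 := by
    intro i
    have h1 : κ i * n ≤ 2 * n := Nat.mul_le_mul_right n (hκ2 i)
    have h2 : i.val < n := i.isLt
    rw [hp]; dsimp only; omega
  have hpinj : Function.Injective p := by
    intro i j hij
    rw [hp] at hij; dsimp only at hij
    have hi : i.val < n := i.isLt
    have hj : j.val < n := j.isLt
    have h' : n * κ i + i.val = n * κ j + j.val := by
      rw [Nat.mul_comm n (κ i), Nat.mul_comm n (κ j)]; exact hij
    have hmod : (n * κ i + i.val) % n = (n * κ j + j.val) % n := by rw [h']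
    rw [Nat.mul_add_mod, Nat.mul_add_mod, Nat.mod_eq_of_lt hi, Nat.mod_eq_of_lt hj] at hmod
    exact Fin.ext hmod
  set w : EE n → ℕ := fun z =>
    if z.2 = sg z.1 then 3 * n + 1 + p z.1 else 3 * n - 1 - p z.1 with hw
  -- branch values
  have hwtop : ∀ z : EE n, z.2 = sg z.1 → w z = 3 * n + 1 + p z.1 := by
    intro z hz; rw [hw]; simp [hz]
  have hwbot : ∀ z : EE n, z.2 ≠ sg z.1 → w z = 3 * n - 1 - p z.1 := by
    intro z hz; rw [hw]; simp [hz]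
  have hbotlt : ∀ z : EE n, z.2 ≠ sg z.1 → w z ≤ 3 * n - 1 := by
    intro z hz; rw [hwbot z hz]; omega
  have hmirror : ∀ z : EE n, w z + w (estar z) = 6 * n := by
    intro z
    have hpz := hpb z.1
    have hes : (estar z).1 = z.1 ∧ (estar z).2 = !z.2 := ⟨rfl, rfl⟩
    by_cases hz : z.2 = sg z.1
    · have h2 : (estar z).2 ≠ sg (estar z).1 := by
        rw [hes.2, hes.1, hz]; simp
      rw [hwtop z hz, hwbot _ h2, hes.1]; omega
    · have hz' : z.2 = !sg z.1 := by
        cases hb : z.2 <;> cases hsgi : sg z.1 <;> simp_all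
      have h2 : (estar z).2 = sg (estar z).1 := by
        rw [hes.2, hes.1, hz']; simp
      rw [hwbot z hz, hwtop _ h2, hes.1]; omega
  have hwb : ∀ z : EE n, w z ≤ 6 * n := by
    intro z
    have := hmirror z; omega
  have hwinj : Function.Injective w := by
    intro z z' hzz
    by_cases h1 : z.2 = sg z.1 <;> by_cases h2 : z'.2 = sg z'.1
    · rw [hwtop z h1, hwtop z' h2] at hzz
      have : p z.1 = p z'.1 := by omega
      have h1' : z.1 = z'.1 := hpinj this
      exact Prod.ext h1' (by rw [h1, h2, h1'])
    · exfalso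
      have := hbotlt z' h2; rw [hwtop z h1] at hzz; omega
    · exfalso
      have := hbotlt z h1; rw [hwtop z' h2] at hzz; omega
    · rw [hwbot z h1, hwbot z' h2] at hzz
      have hb1 := hpb z.1
      have hb2 := hpb z'.1
      have : p z.1 = p z'.1 := by omega
      have h1' : z.1 = z'.1 := hpinj this
      have hbb : z.2 = z'.2 := by
        cases hb : z.2 <;> cases hb' : z'.2 <;> rw [h1'] at h1 <;> simp_all
      exact Prod.ext h1' hbb
  refine ⟨⟨w, hwinj, ?_⟩, ?_, ?_, ?_⟩
  · -- rev
    intro x y hxy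
    have h1 := hmirror x
    have h2 := hmirror y
    omega
  · -- 5n+1 iff mem I
    intro z
    dsimp only
    constructor
    · intro hz
      have htop : z.2 = sg z.1 := by
        by_contra h
        have := hbotlt z h; omega
      rw [hwtop z htop] at hz
      have hκge : κ z.1 = 2 := by
        by_contra h
        have hk := hκ2 z.1
        have : κ z.1 ≤ 1 := by omega
        have : κ z.1 * n ≤ 1 * n := Nat.mul_le_mul_right n this
        have hi : z.1.val < n := z.1.isLt
        rw [hp] at hz; dsimp only at hz; omega
      have : (z.1, sg z.1) ∈ I := by
        by_contra h
        rw [hκ] at hκge; dsimp only at hκge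
        rw [if_neg h] at hκge
        split at hκge <;> omega
      rwa [← htop] at this
      -- z = (z.1, z.2), need (z.1, z.2) ∈ I
    · intro hz
      have hbs : z.2 = sg z.1 := hsgS z.1 z.2 (hIS (by rwa [show (z.1, z.2) = z from rfl]))
      have hκeq : κ z.1 = 2 := by
        rw [hκ]; dsimp only
        rw [if_pos (by rwa [← hbs, show (z.1, z.2) = z from rfl])]
      rw [hwtop z hbs, hp]; dsimp only
      rw [hκeq]; omega
  · -- 4n+1 → mem S
    intro z hz
    dsimp only at hz
    have htop : z.2 = sg z.1 := by
      by_contra h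
      have := hbotlt z h; omega
    rw [hwtop z htop] at hz
    have hκge : 1 ≤ κ z.1 := by
      by_contra h
      have : κ z.1 = 0 := by omega
      rw [hp] at hz; dsimp only at hz
      rw [this] at hz
      have hi : z.1.val < n := z.1.isLt
      omega
    have : (z.1, sg z.1) ∈ S := by
      by_contra h
      have hnI : (z.1, sg z.1) ∉ I := fun hI => h (hIS hI)
      rw [hκ] at hκge; dsimp only at hκge
      rw [if_neg hnI, if_neg h] at hκge; omega
    rwa [← htop] at this
  · -- mem S → 4n+1
    intro j hj
    dsimp only
    have hbs : j.2 = sg j.1 := hsgS j.1 j.2 (by rwa [show (j.1, j.2) = j from rfl])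
    have hκge : 1 ≤ κ j.1 := by
      rw [hκ]; dsimp only
      split
      · omega
      · rw [if_pos (by rwa [← hbs, show (j.1, j.2) = j from rfl])]
    rw [hwtop j hbs, hp]; dsimp only
    have : κ j.1 * n ≥ 1 * n := Nat.mul_le_mul_right n hκge
    omega

end Ordering
section Augment
variable {n : ℕ} {𝓑 : Set (Finset (EE n))}

lemma augmentation (h : IsSymplecticMatroid 𝓑) {I J B₀ B₁ : Finset (EE n)}
    (hB₀ : B₀ ∈ 𝓑) (hI : I ⊆ B₀) (hB₁ : B₁ ∈ 𝓑) (hJ : J ⊆ B₁)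
    (hadm : Admissible (I ∪ J)) (hcard : I.card < J.card) :
    ∃ z ∈ J, z ∉ I ∧ ∃ B ∈ 𝓑, I ∪ {z} ⊆ B := by
  classical
  have hJne : J.Nonempty := Finset.card_pos.1 (by omega)
  obtain ⟨j0, hj0⟩ := hJne
  have hn : 0 < n := j0.1.pos
  obtain ⟨o, hP1, hP2a, hP2b⟩ :=
    exists_ordering hn (I ∪ J) I Finset.subset_union_left hadm
  obtain ⟨M, hM, hMmax⟩ := exists_greatest h o
  -- I ⊆ M
  have hB₀f : B₀.filter (fun z => 5 * n + 1 ≤ o.w z) = I := by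
    ext z
    simp only [Finset.mem_filter]
    constructor
    · rintro ⟨-, hz⟩; exact (hP1 z).1 hz
    · intro hz; exact ⟨hI hz, (hP1 z).2 hz⟩
  have hMf : M.filter (fun z => 5 * n + 1 ≤ o.w z) ⊆ I := fun z hz =>
    (hP1 z).1 (Finset.mem_filter.1 hz).2
  have hcnt := setLE_count o (hMmax B₀ hB₀) (5 * n + 1)
  rw [hB₀f] at hcnt
  have hfeq : M.filter (fun z => 5 * n + 1 ≤ o.w z) = I :=
    Finset.eq_of_subset_of_card_le hMf hcnt
  have hIM : I ⊆ M := by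
    rw [← hfeq]; exact Finset.filter_subset _ _
  -- many elements of S in M
  have hJB₁ : J ⊆ B₁.filter (fun z => 4 * n + 1 ≤ o.w z) := fun z hz =>
    Finset.mem_filter.2 ⟨hJ hz, hP2b z (Finset.mem_union_right _ hz)⟩
  have hcnt2 := setLE_count o (hMmax B₁ hB₁) (4 * n + 1)
  have hJle : J.card ≤ (M.filter (fun z => 4 * n + 1 ≤ o.w z)).card :=
    le_trans (Finset.card_le_card hJB₁) hcnt2
  have hsubS : M.filter (fun z => 4 * n + 1 ≤ o.w z) ⊆ I ∪ J := fun z hz =>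
    hP2a z (Finset.mem_filter.1 hz).2
  have hnsub : ¬ M.filter (fun z => 4 * n + 1 ≤ o.w z) ⊆ I := by
    intro hs
    have := Finset.card_le_card hs
    omega
  obtain ⟨z, hzF, hzI⟩ := Finset.not_subset.1 hnsub
  have hzJ : z ∈ J := (Finset.mem_union.1 (hsubS hzF)).resolve_left hzI
  refine ⟨z, hzJ, hzI, M, hM, Finset.union_subset hIM ?_⟩
  simpa using Finset.mem_of_mem_filter z hzF

end Augment
section WeakElim
variable {n : ℕ} {𝓑 : Set (Finset (EE n))}

lemma circuit_not_subset_circuit {C₁ C₂ : Finset (EE n)} (h1 : C₁ ∈ Circuits 𝓑)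
    (h2 : C₂ ∈ Circuits 𝓑) (hne : C₂ ≠ C₁) : ¬ C₂ ⊆ C₁ := by
  intro hsub
  obtain ⟨B, hB, hCB⟩ := h1.2.2 C₂ (HasSubset.Subset.ssubset_of_ne hsub hne) h2.1
  exact h2.2.1 B hB hCB

lemma weak_elim (h : IsSymplecticMatroid 𝓑) {C₁ C₂ : Finset (EE n)}
    (h1 : C₁ ∈ Circuits 𝓑) (h2 : C₂ ∈ Circuits 𝓑) (hne : C₁ ≠ C₂)
    (hadm : Admissible (C₁ ∪ C₂)) {x : EE n} (hx₁ : x ∈ C₁) (hx₂ : x ∈ C₂) :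
    ∃ C ∈ Circuits 𝓑, C ⊆ (C₁ ∪ C₂) \ {x} := by
  classical
  set U := C₁ ∪ C₂ with hU
  have hadm' : Admissible (U \ {x}) := admissible_subset (Finset.sdiff_subset) hadm
  refine exists_circuit_of_dep 𝓑 _ hadm' ?_
  by_contra hcon
  push_neg at hcon
  obtain ⟨B, hB, hUB⟩ := hcon
  obtain ⟨f, hf₂, hf₁⟩ := Finset.not_subset.1 (circuit_not_subset_circuit h1 h2 (Ne.symm hne))
  -- the candidate independent supersets of C₂ \ {f} inside U
  set cand := U.powerset.filter (fun I => C₂ \ {f} ⊆ I ∧ ∃ B' ∈ 𝓑, I ⊆ B') with hcand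
  have hC₂U : C₂ ⊆ U := Finset.subset_union_right
  have hC₁U : C₁ ⊆ U := Finset.subset_union_left
  have hbase : (C₂ \ {f}) ∈ cand := by
    refine Finset.mem_filter.2 ⟨Finset.mem_powerset.2 (Finset.sdiff_subset.trans hC₂U),
      Finset.Subset.refl _, ?_⟩
    have hss : C₂ \ {f} ⊂ C₂ := by
      refine Finset.ssubset_iff_of_subset Finset.sdiff_subset |>.2 ⟨f, hf₂, by simp⟩
    exact h2.2.2 _ hss (admissible_subset Finset.sdiff_subset h2.1)
  obtain ⟨I, hIcand, hImax⟩ := cand.exists_max_image Finset.card ⟨_, hbase⟩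
  obtain ⟨hIU', hC₂I, B₀, hB₀, hIB₀⟩ := Finset.mem_filter.1 hIcand
  have hIU : I ⊆ U := Finset.mem_powerset.1 hIU'
  have hfI : f ∉ I := by
    intro hfI
    refine h2.2.1 B₀ hB₀ (fun a ha => hIB₀ ?_)
    by_cases haf : a = f
    · rwa [haf]
    · exact hC₂I (Finset.mem_sdiff.2 ⟨ha, by simp [haf]⟩)
  have hC₁I : ¬ C₁ ⊆ I := fun hs => h1.2.1 B₀ hB₀ (hs.trans hIB₀)
  obtain ⟨g, hg₁, hgI⟩ := Finset.not_subset.1 hC₁I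
  have hfg : f ≠ g := fun hfg => hf₁ (hfg ▸ hg₁)
  have hIcard : I.card < (U \ {x}).card := by
    have hIsub : I ⊆ U \ {f, g} := by
      intro a ha
      refine Finset.mem_sdiff.2 ⟨hIU ha, ?_⟩
      simp only [Finset.mem_insert, Finset.mem_singleton]
      rintro (rfl | rfl)
      · exact hfI ha
      · exact hgI ha
    have h1' := Finset.card_le_card hIsub
    have hsub1 : ({f, g} : Finset (EE n)) ⊆ U := by
      intro a ha
      simp only [Finset.mem_insert, Finset.mem_singleton] at ha
      rcases ha with rfl | rfl
      · exact hC₂U hf₂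
      · exact hC₁U hg₁
    have hcfg : ({f, g} : Finset (EE n)).card = 2 := by
      rw [Finset.card_insert_of_notMem (by simpa using hfg), Finset.card_singleton]
    have h2' := Finset.card_sdiff_of_subset hsub1
    have h3' := Finset.card_sdiff_of_subset (Finset.singleton_subset_iff.2 (hC₁U hx₁) : {x} ⊆ U)
    have h4' := Finset.card_le_card hsub1
    rw [hcfg] at h2' h4'
    rw [Finset.card_singleton] at h3'
    omega
  have hadmIJ : Admissible (I ∪ (U \ {x})) :=
    admissible_subset (Finset.union_subset hIU Finset.sdiff_subset) hadm
  obtain ⟨z, hzJ, hzI, B', hB', hsub⟩ := augmentation h hB₀ hIB₀ hB hUB hadmIJ hIcard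
  have hnew : (I ∪ {z}) ∈ cand := by
    refine Finset.mem_filter.2 ⟨Finset.mem_powerset.2 ?_, ?_, B', hB', hsub⟩
    · exact Finset.union_subset hIU (Finset.singleton_subset_iff.2 ((Finset.mem_sdiff.1 hzJ).1))
    · exact hC₂I.trans Finset.subset_union_left
  have hle := hImax _ hnew
  have : (I ∪ {z}).card = I.card + 1 := by
    rw [Finset.union_comm]
    simpa using Finset.card_insert_of_notMem hzI
  omega

end WeakElim
section Strong
variable {n : ℕ} {𝓑 : Set (Finset (EE n))}

lemma strong_aux (h : IsSymplecticMatroid 𝓑) :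
    ∀ N : ℕ, ∀ C₁ C₂ : Finset (EE n), (C₁ ∪ C₂).card ≤ N →
      C₁ ∈ Circuits 𝓑 → C₂ ∈ Circuits 𝓑 → C₁ ≠ C₂ → Admissible (C₁ ∪ C₂) →
      ∀ x, x ∈ C₁ → x ∈ C₂ → ∀ c, c ∈ C₁ → c ∉ C₂ →
      ∃ C ∈ Circuits 𝓑, c ∈ C ∧ C ⊆ (C₁ ∪ C₂) \ {x} := by
  intro N
  induction N with
  | zero =>
    intro C₁ C₂ hcard _ _ _ _ x hx1 _ _ _ _
    exfalso
    have : x ∈ C₁ ∪ C₂ := Finset.mem_union_left _ hx1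
    have := Finset.card_pos.2 ⟨x, this⟩
    omega
  | succ N ih =>
    intro C₁ C₂ hcard h1 h2 hne hadm x hx1 hx2 c hc1 hc2
    obtain ⟨C₃, hC₃, hC₃sub⟩ := weak_elim h h1 h2 hne hadm hx1 hx2
    by_cases hcC₃ : c ∈ C₃
    · exact ⟨C₃, hC₃, hcC₃, hC₃sub⟩
    have hC₃U : C₃ ⊆ C₁ ∪ C₂ := hC₃sub.trans Finset.sdiff_subset
    have hxC₃ : x ∉ C₃ := fun h' => by simpa using (Finset.mem_sdiff.1 (hC₃sub h')).2
    have hns : ¬ C₃ ⊆ C₁ := by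
      intro hs
      have hss : C₃ ⊂ C₁ := ⟨hs, fun h' => hxC₃ (h' hx1)⟩
      obtain ⟨B, hB, hCB⟩ := h1.2.2 C₃ hss hC₃.1
      exact hC₃.2.1 B hB hCB
    obtain ⟨y, hyC₃, hyC₁⟩ := Finset.not_subset.1 hns
    have hyC₂ : y ∈ C₂ := (Finset.mem_union.1 (hC₃U hyC₃)).resolve_left hyC₁
    have hne23 : C₂ ≠ C₃ := fun h' => hxC₃ (h' ▸ hx2)
    have hadm23 : Admissible (C₂ ∪ C₃) :=
      admissible_subset (Finset.union_subset Finset.subset_union_right hC₃U) hadm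
    have hcC₂₃ : c ∉ C₂ ∪ C₃ := by
      simp only [Finset.mem_union]
      rintro (h' | h')
      · exact hc2 h'
      · exact hcC₃ h'
    have hcard23 : (C₂ ∪ C₃).card ≤ N := by
      have hsub : C₂ ∪ C₃ ⊆ (C₁ ∪ C₂).erase c := by
        intro a ha
        refine Finset.mem_erase.2 ⟨fun h' => hcC₂₃ (h' ▸ ha), ?_⟩
        rcases Finset.mem_union.1 ha with h' | h'
        · exact Finset.mem_union_right _ h'
        · exact hC₃U h'
      have h1' := Finset.card_le_card hsub
      have h2' := Finset.card_erase_of_mem (Finset.mem_union_left C₂ hc1)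
      omega
    obtain ⟨C₄, hC₄, hxC₄, hC₄sub⟩ :=
      ih C₂ C₃ hcard23 h2 hC₃ hne23 hadm23 y hyC₂ hyC₃ x hx2 hxC₃
    have hC₄U : C₄ ⊆ C₁ ∪ C₂ :=
      hC₄sub.trans (Finset.sdiff_subset.trans
        (Finset.union_subset Finset.subset_union_right hC₃U))
    have hcC₄ : c ∉ C₄ := fun h' => hcC₂₃ (Finset.sdiff_subset (hC₄sub h'))
    have hne14 : C₁ ≠ C₄ := fun h' => hcC₄ (h' ▸ hc1)
    have hyC₄ : y ∉ C₄ := fun h' => by simpa using (Finset.mem_sdiff.1 (hC₄sub h')).2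
    have hadm14 : Admissible (C₁ ∪ C₄) :=
      admissible_subset (Finset.union_subset Finset.subset_union_left hC₄U) hadm
    have hcard14 : (C₁ ∪ C₄).card ≤ N := by
      have hsub : C₁ ∪ C₄ ⊆ (C₁ ∪ C₂).erase y := by
        intro a ha
        refine Finset.mem_erase.2 ⟨?_, ?_⟩
        · rintro rfl
          rcases Finset.mem_union.1 ha with h' | h'
          · exact hyC₁ h'
          · exact hyC₄ h'
        · rcases Finset.mem_union.1 ha with h' | h'
          · exact Finset.mem_union_left _ h'
          · exact hC₄U h'
      have h1' := Finset.card_le_card hsub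
      have h2' := Finset.card_erase_of_mem (Finset.mem_union_right C₁ hyC₂)
      omega
    obtain ⟨C₅, hC₅, hcC₅, hsub₅⟩ :=
      ih C₁ C₄ hcard14 h1 hC₄ hne14 hadm14 x hx1 hxC₄ c hc1 hcC₄
    refine ⟨C₅, hC₅, hcC₅, hsub₅.trans ?_⟩
    exact Finset.sdiff_subset_sdiff (Finset.union_subset Finset.subset_union_left hC₄U)
      (Finset.Subset.refl _)

end Strong
/-- strong circuit elimination: for every `c ∈ C₁ Δ C₂` there is a
circuit through `c` avoiding `x` inside `C₁ ∪ C₂`. -/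
theorem strong_circuit_elimination {n : ℕ} (𝓑 : Set (Finset (EE n)))
    (h : IsSymplecticMatroid 𝓑) (C₁ : Finset (EE n)) (hC₁ : C₁ ∈ Circuits 𝓑)
    (C₂ : Finset (EE n)) (hC₂ : C₂ ∈ Circuits 𝓑) (hne : C₁ ≠ C₂)
    (hadm : Admissible (C₁ ∪ C₂)) (x : EE n) (hx : x ∈ C₁ ∩ C₂) :
    ∀ c ∈ (C₁ \ C₂) ∪ (C₂ \ C₁),
      ∃ Cc ∈ Circuits 𝓑, c ∈ Cc ∧ Cc ⊆ (C₁ ∪ C₂) \ {x} := by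
  intro c hc
  obtain ⟨hx1, hx2⟩ := Finset.mem_inter.1 hx
  rcases Finset.mem_union.1 hc with h' | h'
  · obtain ⟨hc1, hc2⟩ := Finset.mem_sdiff.1 h'
    exact strong_aux h (C₁ ∪ C₂).card C₁ C₂ le_rfl hC₁ hC₂ hne hadm x hx1 hx2 c hc1 hc2
  · obtain ⟨hc2, hc1⟩ := Finset.mem_sdiff.1 h'
    have := strong_aux h (C₂ ∪ C₁).card C₂ C₁ le_rfl hC₂ hC₁ (Ne.symm hne)
      (by rwa [Finset.union_comm]) x hx2 hx1 c hc2 hc1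
    rwa [Finset.union_comm] at this
end

section
/- Let B be a collection of admissible subsets of E_{±n}, all of cardinality k ≤ n. If B satisfies the Symmetric Exchange Axiom (for every X, Y ∈ B and i ∈ Y − X, there exists j ∈ X − Y with (X ∪ {i}) − {j} ∈ B), then B satisfies the Maximality Property: for every admissible ordering of E_{±n}, B contains a unique maximal element under the induced partial order. -/
open Finset

lemma forall2_sum_le_s9 {l₁ l₂ : List ℕ} (h : List.Forall₂ (· ≤ ·) l₁ l₂) : l₁.sum ≤ l₂.sum := by
  induction h with
  | nil => simp
  | cons hab _ ih => simpa using Nat.add_le_add hab ih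

lemma forall2_eq_of_sum_s9 {l₁ l₂ : List ℕ} (h : List.Forall₂ (· ≤ ·) l₁ l₂)
    (hs : l₂.sum ≤ l₁.sum) : l₁ = l₂ := by
  induction h with
  | nil => rfl
  | @cons a b t₁ t₂ hab h ih =>
    simp only [List.sum_cons] at hs
    have h2 := forall2_sum_le_s9 h
    have hab' : a = b := by omega
    subst hab'
    rw [ih (by omega)]

lemma forall2_of_countP : ∀ {l₁ l₂ : List ℕ},
    l₁.Pairwise (· ≤ ·) → l₂.Pairwise (· ≤ ·) → l₁.length = l₂.length →
    (∀ m : ℕ, l₁.countP (fun x => decide (m < x)) ≤ l₂.countP (fun x => decide (m < x))) →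
    List.Forall₂ (· ≤ ·) l₁ l₂
  | [], [], _, _, _, _ => List.Forall₂.nil
  | _ :: _, [], _, _, h, _ => by simp at h
  | [], _ :: _, _, _, h, _ => by simp at h
  | a :: t₁, b :: t₂, h₁, h₂, hlen, hc => by
    rw [List.pairwise_cons] at h₁ h₂
    have hlen' : t₁.length = t₂.length := by simpa using hlen
    have hab : a ≤ b := by
      by_contra hba
      push_neg at hba
      have e1 : (a :: t₁).countP (fun x => decide (b < x)) = t₁.length + 1 := by
        rw [List.countP_eq_length.2]
        · simp
        · intro x hx
          rcases List.mem_cons.1 hx with rfl | hx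
          · simpa using hba
          · simpa using lt_of_lt_of_le hba (h₁.1 x hx)
      have e2 : (b :: t₂).countP (fun x => decide (b < x)) ≤ t₂.length := by
        rw [List.countP_cons]
        simpa using List.countP_le_length (p := fun x => decide (b < x)) (l := t₂)
      have := hc b
      omega
    refine List.Forall₂.cons hab (forall2_of_countP h₁.2 h₂.2 hlen' ?_)
    intro m
    rcases le_or_gt b m with hbm | hmb
    · have := hc m
      rw [List.countP_cons, List.countP_cons] at this
      have hma : (decide (m < a) : Bool) = false := by simp; omega
      have hmb' : (decide (m < b) : Bool) = false := by simp; omega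
      rw [hma, hmb'] at this
      simpa using this
    · have : t₂.countP (fun x => decide (m < x)) = t₂.length :=
        List.countP_eq_length.2 (fun x hx => by simpa using lt_of_lt_of_le hmb (h₂.1 x hx))
      rw [this, ← hlen']
      exact List.countP_le_length

lemma sort_countP_s9 (s : Finset ℕ) (p : ℕ → Bool) :
    (Finset.sort s (· ≤ ·)).countP p = Multiset.countP (fun x => p x = true) s.val := by
  rw [List.Perm.countP_eq p (Finset.sort_perm_toList s (· ≤ ·))]
  have : s.val = ↑s.toList := (Multiset.coe_toList _).symm
  rw [this, Multiset.coe_countP]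
  congr 1
  ext x
  simp

lemma replace_le (s : Finset ℕ) {a b : ℕ} (hb : b ∈ s) (ha : a ∉ s) (hba : b ≤ a) :
    List.Forall₂ (· ≤ ·) (Finset.sort s (· ≤ ·))
      (Finset.sort (insert a (s.erase b)) (· ≤ ·)) := by
  have hane : a ∉ s.erase b := fun h => ha (Finset.mem_of_mem_erase h)
  have hcard : (insert a (s.erase b)).card = s.card := by
    rw [Finset.card_insert_of_notMem hane, Finset.card_erase_of_mem hb]
    have : 0 < s.card := Finset.card_pos.2 ⟨b, hb⟩
    omega
  apply forall2_of_countP (Finset.pairwise_sort _ _) (Finset.pairwise_sort _ _)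
  · rw [Finset.length_sort, Finset.length_sort, hcard]
  · intro m
    rw [sort_countP_s9, sort_countP_s9, Finset.insert_val_of_notMem hane, Finset.erase_val,
      Multiset.countP_cons]
    have hs : Multiset.countP (fun x => decide (m < x)) s.val
        = Multiset.countP (fun x => decide (m < x)) (s.val.erase b)
          + if decide (m < b) = true then 1 else 0 := by
      conv_lhs => rw [← Multiset.cons_erase (show b ∈ s.val from hb)]
      rw [Multiset.countP_cons]
    rw [hs]
    have : (if decide (m < b) = true then 1 else 0) ≤ (if decide (m < a) = true then (1:ℕ) else 0) := by
      split_ifs with h1 h2 <;> simp_all <;> omega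
    omega

/-- the Symmetric Exchange Axiom implies the Maximality Property
for a collection of admissible `k`-subsets of `E_{±n}`, `k ≤ n`. -/
theorem symmetric_exchange_implies_maximality {n k : ℕ} (hk : k ≤ n)
    (𝓑 : Set (Finset (EE n))) (hne : 𝓑.Nonempty)
    (hadm : ∀ B ∈ 𝓑, Admissible B) (hcard : ∀ B ∈ 𝓑, B.card = k)
    (hex : ∀ X ∈ 𝓑, ∀ Y ∈ 𝓑, ∀ i ∈ Y \ X, ∃ j ∈ X \ Y, insert i X \ {j} ∈ 𝓑) :
    HasUniqueMaximal 𝓑 := by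
  classical
  intro o
  -- sum of the sorted rank list equals the sum of ranks
  have sortsum : ∀ S : Finset (EE n),
      (Finset.sort (S.image o.w) (· ≤ ·)).sum = ∑ x ∈ S, o.w x := by
    intro S
    rw [(Finset.sort_perm_toList (S.image o.w) (· ≤ ·)).sum_eq]
    have h1 : (S.image o.w).toList.sum = ((S.image o.w).toList.map id).sum := by simp
    rw [h1, Finset.sum_map_toList]
    rw [Finset.sum_image (fun x _ y _ h => o.inj h)]
    rfl
  obtain ⟨M, hM, hMmax⟩ := Set.Finite.exists_maximalFor (fun B : Finset (EE n) => ∑ x ∈ B, o.w x)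
    𝓑 (Set.toFinite 𝓑) hne
  -- M is maximal in the setLE order
  have hMismax : ∀ X ∈ 𝓑, (∀ S ∈ 𝓑, (∑ x ∈ X, o.w x) ≤ ∑ x ∈ S, o.w x →
      (∑ x ∈ X, o.w x) = ∑ x ∈ S, o.w x) → ∀ S ∈ 𝓑, setLE o X S → X = S := by
    intro X hX hXmax S hS hle
    have h1 := forall2_sum_le_s9 hle
    rw [sortsum, sortsum] at h1
    have h2 := hXmax S hS h1
    have h3 := forall2_eq_of_sum_s9 hle (by rw [sortsum, sortsum, h2])
    have h4 : X.image o.w = S.image o.w := by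
      rw [← Finset.sort_toFinset (X.image o.w) (· ≤ ·), h3, Finset.sort_toFinset]
    exact Finset.image_injective o.inj h4
  -- the key exchange argument
  have key : ∀ X ∈ 𝓑, ∀ Y ∈ 𝓑, (∀ S ∈ 𝓑, setLE o X S → X = S) →
      ∀ i ∈ Y \ X, (∀ x ∈ (X \ Y) ∪ (Y \ X), o.w x ≤ o.w i) → False := by
    intro X hX Y hY hXmax i hi hmax
    obtain ⟨j, hj, hX'B⟩ := hex X hX Y hY i hi
    rw [Finset.mem_sdiff] at hi hj
    have hij : i ≠ j := fun h => hi.2 (h ▸ hj.1)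
    have hwji : o.w j ≤ o.w i := hmax j (Finset.mem_union_left _
      (Finset.mem_sdiff.2 ⟨hj.1, hj.2⟩))
    have hX'eq : insert i X \ {j} = insert i (X.erase j) := by
      rw [Finset.sdiff_singleton_eq_erase, Finset.erase_insert_of_ne hij]
    have him : (insert i X \ {j}).image o.w
        = insert (o.w i) ((X.image o.w).erase (o.w j)) := by
      rw [hX'eq, Finset.image_insert, Finset.image_erase o.inj]
    have hwiX : o.w i ∉ X.image o.w := by
      intro h
      obtain ⟨x, hx, hwx⟩ := Finset.mem_image.1 h
      exact hi.2 (o.inj hwx ▸ hx)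
    have hle : setLE o X (insert i X \ {j}) := by
      rw [setLE, him]
      exact replace_le _ (Finset.mem_image_of_mem _ hj.1) hwiX hwji
    have heq := hXmax _ hX'B hle
    have : i ∈ X := by
      rw [heq, hX'eq]
      exact Finset.mem_insert_self _ _
    exact hi.2 this
  refine ⟨M, ⟨hM, hMismax M hM (fun S hS h => le_antisymm h (hMmax hS h))⟩, ?_⟩
  rintro N ⟨hN, hNmax⟩
  by_contra hMN
  have hD : ((M \ N) ∪ (N \ M)).Nonempty := by
    rw [Finset.nonempty_iff_ne_empty]
    intro h
    rw [Finset.union_eq_empty, Finset.sdiff_eq_empty_iff_subset,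
      Finset.sdiff_eq_empty_iff_subset] at h
    exact hMN (Finset.Subset.antisymm h.2 h.1)
  obtain ⟨i, hiD, himax⟩ := Finset.exists_max_image _ o.w hD
  rcases Finset.mem_union.1 hiD with hi | hi
  · exact key N hN M hM hNmax i hi
      (fun x hx => himax x (by rwa [Finset.union_comm] at hx))
  · exact key M hM N hN (hMismax M hM (fun S hS h => le_antisymm h (hMmax hS h))) i hi (fun x hx => himax x hx)
end

section
/- Let C be a collection of admissible subsets of E_{±n} satisfying: (SC1) ∅ ∉ C; (SC2) no member of C properly contains another; (SC3) circuit elimination for pairs with admissible union; (SC4) no admissible set P with |P| less than the size of a maximal C-free admissible set spans all of E_{±n} − (P ∪ P*). Let B be the collection of maximal admissible subsets of E_{±n} containing no member of C. Then all members of B have the same cardinality. -/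
open Finset

/-- Claim 1: under (SC1)–(SC4), the maximal admissible subsets
containing no member of `𝓒` are equicardinal. -/
theorem bases_equicardinal {n : ℕ} (𝓒 : Set (Finset (EE n)))
    (hadm : ∀ C ∈ 𝓒, Admissible C)
    (h1 : SC1 𝓒) (h2 : SC2 𝓒) (h3 : SC3 𝓒) (h4 : SC4 𝓒) :
    ∀ B₁ ∈ BasesOf 𝓒, ∀ B₂ ∈ BasesOf 𝓒, B₁.card = B₂.card := by
  have key : ∀ B₁ ∈ BasesOf 𝓒, ∀ B₂ ∈ BasesOf 𝓒, ¬ B₁.card < B₂.card := by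
    intro B₁ hB₁ B₂ hB₂ hlt
    obtain ⟨hadm1, hno1, hmax1⟩ := hB₁
    obtain ⟨x, hx, hns⟩ := h4 B₁ hadm1 B₂ hB₂ hlt
    simp only [Finset.mem_union] at hx
    push_neg at hx
    obtain ⟨hx1, hx2⟩ := hx
    have hadm' : Admissible (insert x B₁) := by
      unfold Admissible starSet at *
      rw [Finset.image_insert, Finset.disjoint_insert_left]
      refine ⟨?_, ?_⟩
      · simp only [Finset.mem_insert]
        push_neg
        refine ⟨?_, hx2⟩
        intro h
        have : x.2 = !x.2 := congrArg Prod.snd h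
        simp at this
      · rw [Finset.disjoint_insert_right]
        refine ⟨?_, hadm1⟩
        intro hmem
        exact hx2 (Finset.mem_image.mpr ⟨estar x, hmem, by simp [estar]⟩)
    obtain ⟨C, hC, hCsub⟩ := hmax1 _ (Finset.ssubset_insert hx1) hadm'
    apply hns
    refine ⟨C, hC, ?_⟩
    have hxC : x ∈ C := by
      by_contra hxc
      refine hno1 C hC (fun y hy => ?_)
      rcases Finset.mem_insert.mp (hCsub hy) with h | h
      · exact absurd (h ▸ hy) hxc
      · exact h
    apply Finset.Subset.antisymm
    · intro y hy
      rcases Finset.mem_sdiff.mp hy with ⟨hyC, hyB⟩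
      rcases Finset.mem_insert.mp (hCsub hyC) with h | h
      · simpa using h
      · exact absurd h hyB
    · intro y hy
      rw [Finset.mem_singleton] at hy
      subst hy
      exact Finset.mem_sdiff.mpr ⟨hxC, hx1⟩
  intro B₁ hB₁ B₂ hB₂
  exact le_antisymm (not_lt.mp (key B₂ hB₂ B₁ hB₁)) (not_lt.mp (key B₁ hB₁ B₂ hB₂))
end

section
/- Let C be a collection of admissible subsets of E_{±n} satisfying axioms (SC1)–(SC4), and let B be the collection of maximal admissible subsets containing no member of C. If B ∈ B and x ∉ B with B ∪ {x} admissible, then B ∪ {x} contains a unique member D of C, and D = {x} ∪ {b ∈ B : (B ∪ {x}) − {b} ∈ B}. -/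
open Finset

lemma estar_invol {n : ℕ} (x : EE n) : estar (estar x) = x := by
  simp [estar]

lemma mem_starSet {n : ℕ} {S : Finset (EE n)} {x : EE n} :
    x ∈ starSet S ↔ estar x ∈ S := by
  constructor
  · intro h
    simp only [starSet, Finset.mem_image] at h
    obtain ⟨y, hy, rfl⟩ := h
    simpa [estar_invol] using hy
  · intro h
    simp only [starSet, Finset.mem_image]
    exact ⟨estar x, h, estar_invol x⟩

lemma admissible_mono {n : ℕ} {S T : Finset (EE n)} (hTS : T ⊆ S) (hS : Admissible S) :
    Admissible T := by
  refine Finset.disjoint_left.2 fun a ha ha' => ?_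
  exact Finset.disjoint_left.1 hS (hTS ha) (mem_starSet.2 (hTS (mem_starSet.1 ha')))

lemma exists_basis_superset {n : ℕ} (𝓒 : Set (Finset (EE n))) (E : Finset (EE n))
    (hE : Admissible E) (hfree : ∀ C ∈ 𝓒, ¬ C ⊆ E) :
    ∃ E' ∈ BasesOf 𝓒, E ⊆ E' := by
  classical
  let s : Finset (Finset (EE n)) :=
    Finset.univ.filter (fun F => E ⊆ F ∧ Admissible F ∧ ∀ C ∈ 𝓒, ¬ C ⊆ F)
  have hEs : E ∈ s := by
    simp only [s, Finset.mem_filter, Finset.mem_univ, true_and]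
    exact ⟨Finset.Subset.refl _, hE, hfree⟩
  obtain ⟨F, hFs, hmax⟩ := Finset.exists_max_image s Finset.card ⟨E, hEs⟩
  simp only [s, Finset.mem_filter, Finset.mem_univ, true_and] at hmax hFs
  obtain ⟨hEF, hFadm, hFfree⟩ := hFs
  refine ⟨F, ⟨hFadm, hFfree, ?_⟩, hEF⟩
  intro D hFD hDadm
  by_contra hno
  push_neg at hno
  have := hmax D ⟨hEF.trans hFD.subset, hDadm, hno⟩
  exact absurd this (not_le.2 (Finset.card_lt_card hFD))

lemma basis_card_le {n : ℕ} {𝓒 : Set (Finset (EE n))} (h4 : SC4 𝓒)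
    {B E' : Finset (EE n)} (hB : B ∈ BasesOf 𝓒) (hE' : E' ∈ BasesOf 𝓒) :
    E'.card ≤ B.card := by
  by_contra hlt
  push_neg at hlt
  obtain ⟨y, hy, hns⟩ := h4 B hB.1 E' hE' hlt
  have hyB : y ∉ B := fun h => hy (Finset.mem_union_left _ h)
  have hyBs : y ∉ starSet B := fun h => hy (Finset.mem_union_right _ h)
  have hadm : Admissible (insert y B) := by
    refine Finset.disjoint_left.2 fun a ha ha' => ?_
    rw [mem_starSet] at ha'
    rcases Finset.mem_insert.1 ha with rfl | haB
    · rcases Finset.mem_insert.1 ha' with h | h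
      · exact absurd h (by simp [estar, Prod.ext_iff])
      · exact hyBs (mem_starSet.2 h)
    · rcases Finset.mem_insert.1 ha' with h | h
      · apply hyBs
        rw [mem_starSet, ← h, estar_invol]
        exact haB
      · exact Finset.disjoint_left.1 hB.1 haB (mem_starSet.2 h)
  obtain ⟨J, hJ, hJsub⟩ := hB.2.2 (insert y B) (Finset.ssubset_insert hyB) hadm
  apply hns
  refine ⟨J, hJ, ?_⟩
  have hyJ : y ∈ J := by
    by_contra hyJ
    exact hB.2.1 J hJ (fun a ha =>
      (Finset.mem_insert.1 (hJsub ha)).resolve_left (fun h => hyJ (h ▸ ha)))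
  apply Finset.Subset.antisymm
  · intro a ha
    rcases Finset.mem_sdiff.1 ha with ⟨haJ, haB⟩
    rcases Finset.mem_insert.1 (hJsub haJ) with rfl | h
    · exact Finset.mem_singleton_self _
    · exact absurd h haB
  · intro a ha
    rw [Finset.mem_singleton] at ha
    subst ha
    exact Finset.mem_sdiff.2 ⟨hyJ, hyB⟩

open scoped Classical in
/-- Claim 2: under (SC1)–(SC4), if `B` is a maximal `𝓒`-free
admissible set, `x ∉ B` and `B ∪ {x}` is admissible, then `B ∪ {x}` contains a
unique member of `𝓒`, namely `{x} ∪ {b ∈ B : (B ∪ {x}) − {b} ∈ BasesOf 𝓒}`. -/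
theorem unique_circuit_from_axioms {n : ℕ} (𝓒 : Set (Finset (EE n)))
    (hadm : ∀ C ∈ 𝓒, Admissible C)
    (h1 : SC1 𝓒) (h2 : SC2 𝓒) (h3 : SC3 𝓒) (h4 : SC4 𝓒)
    (B : Finset (EE n)) (hB : B ∈ BasesOf 𝓒) (x : EE n) (hx : x ∉ B)
    (hadm' : Admissible (insert x B)) :
    insert x (B.filter (fun b => insert x B \ {b} ∈ BasesOf 𝓒)) ∈ 𝓒 ∧
    insert x (B.filter (fun b => insert x B \ {b} ∈ BasesOf 𝓒)) ⊆ insert x B ∧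
    ∀ D ∈ 𝓒, D ⊆ insert x B →
      D = insert x (B.filter (fun b => insert x B \ {b} ∈ BasesOf 𝓒)) := by
  classical
  obtain ⟨hBadm, hBfree, hBmax⟩ := hB
  obtain ⟨D, hD, hDsub⟩ := hBmax (insert x B) (Finset.ssubset_insert hx) hadm'
  have hxD : ∀ D' ∈ 𝓒, D' ⊆ insert x B → x ∈ D' := by
    intro D' hD' hsub
    by_contra hxD'
    exact hBfree D' hD' (fun a ha =>
      (Finset.mem_insert.1 (hsub ha)).resolve_left (fun h => hxD' (h ▸ ha)))
  have huniq : ∀ D' ∈ 𝓒, D' ⊆ insert x B → D' = D := by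
    intro D' hD' hsub
    by_contra hne
    obtain ⟨C, hC, hCsub⟩ := h3 D' hD' D hD hne
      (admissible_mono (Finset.union_subset hsub hDsub) hadm') x
      (Finset.mem_inter.2 ⟨hxD D' hD' hsub, hxD D hD hDsub⟩)
    apply hBfree C hC
    intro a ha
    have h := hCsub ha
    rw [Finset.mem_sdiff, Finset.mem_singleton] at h
    rcases Finset.mem_union.1 h.1 with h' | h'
    · exact (Finset.mem_insert.1 (hsub h')).resolve_left h.2
    · exact (Finset.mem_insert.1 (hDsub h')).resolve_left h.2
  have key : insert x (B.filter fun b => insert x B \ {b} ∈ BasesOf 𝓒) = D := by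
    apply Finset.Subset.antisymm
    · intro a ha
      rcases Finset.mem_insert.1 ha with rfl | ha
      · exact hxD D hD hDsub
      · obtain ⟨haB, hbasis⟩ := Finset.mem_filter.1 ha
        by_contra haD
        refine hbasis.2.1 D hD (fun c hc => Finset.mem_sdiff.2 ⟨hDsub hc, ?_⟩)
        rw [Finset.mem_singleton]
        rintro rfl
        exact haD hc
    · intro a haD
      by_cases hax : a = x
      · subst hax
        exact Finset.mem_insert_self _ _
      · have haB : a ∈ B := (Finset.mem_insert.1 (hDsub haD)).resolve_left hax
        refine Finset.mem_insert_of_mem (Finset.mem_filter.2 ⟨haB, ?_⟩)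
        have hAadm : Admissible (insert x B \ {a}) :=
          admissible_mono Finset.sdiff_subset hadm'
        have hAfree : ∀ C ∈ 𝓒, ¬ C ⊆ insert x B \ {a} := by
          intro C hC hsub
          have hCD : C = D := huniq C hC (hsub.trans Finset.sdiff_subset)
          subst hCD
          exact (Finset.mem_sdiff.1 (hsub haD)).2 (Finset.mem_singleton_self a)
        obtain ⟨E', hE', hAE'⟩ := exists_basis_superset 𝓒 _ hAadm hAfree
        have hAcard : (insert x B \ {a}).card = B.card := by
          rw [Finset.card_sdiff_of_subset (by
            simpa using Finset.mem_insert_of_mem haB : ({a} : Finset (EE n)) ⊆ insert x B)]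
          simp [Finset.card_insert_of_notMem hx]
        have hle := basis_card_le h4 ⟨hBadm, hBfree, hBmax⟩ hE'
        have hAE : insert x B \ {a} = E' :=
          Finset.eq_of_subset_of_card_le hAE' (by omega)
        rw [hAE]
        exact hE'
  refine ⟨by rw [key]; exact hD, by rw [key]; exact hDsub, ?_⟩
  intro D' hD' hsub
  rw [key]
  exact huniq D' hD' hsub
end
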